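/- Let G be a properly edge-coloured μ-balanced graph with n vertices, average degree d ≥ 2 and s colours. Let 2 ≤ k < d/32 be an integer such that s ≤ (1/4)·n·d^{−k+1}·μ^{−k+1}. Let α > 1 and assume hom(C_{2k}, G) ≤ α·n·d^k. Then, for t = ⌈s/(8kμ)⌉, there are at least (n·(d/32)^k)^t sequences of labelled paths P_1, ..., P_t which are (k, 2α·16^k)-nice. -/

import Mathlib

open Finset
open scoped Classical
set_option linter.unusedSectionVars false
set_option linter.unusedVariables false
set_option maxHeartbeats 2000000

noncomputable section NicePathsAux

variable {V K : Type*} [Fintype V]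

def dF (E : Finset (V × V)) (v : V) : ℕ := (E.filter fun p => p.1 = v).card
def nbrF (E : Finset (V × V)) (v : V) : Finset V :=
  (E.filter fun p => p.1 = v).image Prod.snd
lemma mem_nbrF {E : Finset (V × V)} {v u : V} : u ∈ nbrF E v ↔ (v, u) ∈ E := by
  constructor
  · rintro h
    simp only [nbrF, mem_image, mem_filter] at h
    obtain ⟨p, ⟨hp, h1⟩, h2⟩ := h
    have : p = (v, u) := by cases p; simp_all
    rwa [this] at hp
  · intro h
    simp only [nbrF, mem_image, mem_filter]
    exact ⟨(v, u), ⟨h, rfl⟩, rfl⟩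

lemma card_nbrF (E : Finset (V × V)) (v : V) : (nbrF E v).card = dF E v := by
  apply Finset.card_image_of_injOn
  intro p hp q hq hpq
  simp only [mem_coe, mem_filter] at hp hq
  exact Prod.ext (hp.2.trans hq.2.symm) hpq

def goodW (c : Sym2 V → K) (E : Finset (V × V)) (ℓ : ℕ) : Finset (Fin (ℓ + 1) → V) :=
  univ.filter fun w =>
    (∀ i : Fin ℓ, (w i.castSucc, w i.succ) ∈ E) ∧ Function.Injective w ∧
    (∀ i j : Fin ℓ, c s(w i.castSucc, w i.succ) = c s(w j.castSucc, w j.succ) → i = j)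

def extSet (c : Sym2 V → K) (E : Finset (V × V)) {ℓ : ℕ} (w : Fin (ℓ + 1) → V) :
    Finset V :=
  (nbrF E (w (Fin.last ℓ))).filter fun u =>
    (∀ i, u ≠ w i) ∧ ∀ i : Fin ℓ, c s(w (Fin.last ℓ), u) ≠ c s(w i.castSucc, w i.succ)

lemma castSucc_ne_last {m : ℕ} (i : Fin m) :
    (i.castSucc : Fin (m + 1)) ≠ Fin.last m := by
  intro h
  have := congrArg Fin.val h
  simp only [Fin.coe_castSucc, Fin.val_last] at this
  have := i.isLt
  omega

lemma goodW_snoc_mem (c : Sym2 V → K) (E : Finset (V × V)) {ℓ : ℕ}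
    (w : Fin (ℓ + 1) → V) (hw : w ∈ goodW c E ℓ) (u : V) :
    Fin.snoc w u ∈ goodW c E (ℓ + 1) ↔ u ∈ extSet c E w := by
  simp only [goodW, mem_filter, mem_univ, true_and] at hw ⊢
  obtain ⟨hadj, hinj, hcol⟩ := hw
  constructor
  · rintro ⟨hadj', hinj', hcol'⟩
    simp only [extSet, mem_filter]
    refine ⟨mem_nbrF.mpr ?_, ?_, ?_⟩
    · have h := hadj' (Fin.last ℓ)
      simpa only [Fin.succ_last, Fin.snoc_castSucc, Fin.snoc_last] using h
    · intro i hui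
      have h1 : (Fin.snoc w u : Fin (ℓ+2) → V) (Fin.last (ℓ+1)) =
          (Fin.snoc w u : Fin (ℓ+2) → V) i.castSucc := by
        rw [Fin.snoc_last, Fin.snoc_castSucc]; exact hui
      exact castSucc_ne_last i (hinj' h1).symm
    · intro i hcc
      have h1 := hcol' (Fin.last ℓ) i.castSucc
      simp only [Fin.succ_last, Fin.succ_castSucc, Fin.snoc_castSucc, Fin.snoc_last] at h1
      exact castSucc_ne_last i (h1 hcc).symm
  · intro hu
    simp only [extSet, mem_filter] at hu
    obtain ⟨hnb, hne, hcf⟩ := hu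
    have hnbE : (w (Fin.last ℓ), u) ∈ E := mem_nbrF.mp hnb
    refine ⟨?_, ?_, ?_⟩
    · intro i
      induction i using Fin.lastCases with
      | last =>
        simpa only [Fin.succ_last, Fin.snoc_castSucc, Fin.snoc_last] using hnbE
      | cast j =>
        simpa only [Fin.succ_castSucc, Fin.snoc_castSucc] using hadj j
    · intro a b hab
      induction a using Fin.lastCases with
      | last =>
        induction b using Fin.lastCases with
        | last => rfl
        | cast j =>
          rw [Fin.snoc_last, Fin.snoc_castSucc] at hab
          exact absurd hab (hne j)
      | cast j =>
        induction b using Fin.lastCases with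
        | last =>
          rw [Fin.snoc_last, Fin.snoc_castSucc] at hab
          exact absurd hab.symm (hne j)
        | cast j' =>
          rw [Fin.snoc_castSucc, Fin.snoc_castSucc] at hab
          rw [hinj hab]
    · intro i j hcc
      induction i using Fin.lastCases with
      | last =>
        induction j using Fin.lastCases with
        | last => rfl
        | cast j' =>
          simp only [Fin.succ_last, Fin.succ_castSucc, Fin.snoc_castSucc,
            Fin.snoc_last] at hcc
          exact absurd hcc (hcf j')
      | cast i' =>
        induction j using Fin.lastCases with
        | last =>
          simp only [Fin.succ_last, Fin.succ_castSucc, Fin.snoc_castSucc,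
            Fin.snoc_last] at hcc
          exact absurd hcc.symm (hcf i')
        | cast j' =>
          simp only [Fin.succ_castSucc, Fin.snoc_castSucc] at hcc
          rw [hcol i' j' hcc]

lemma goodW_init (c : Sym2 V → K) (E : Finset (V × V)) {ℓ : ℕ}
    (w' : Fin (ℓ + 2) → V) (hw' : w' ∈ goodW c E (ℓ + 1)) :
    Fin.init w' ∈ goodW c E ℓ := by
  simp only [goodW, mem_filter, mem_univ, true_and] at hw' ⊢
  obtain ⟨hadj, hinj, hcol⟩ := hw'
  refine ⟨?_, ?_, ?_⟩
  · intro i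
    have := hadj i.castSucc
    simpa only [Fin.succ_castSucc, Fin.init, Fin.coe_eq_castSucc] using this
  · intro a b hab
    simp only [Fin.init] at hab
    exact Fin.castSucc_injective _ (hinj hab)
  · intro i j hcc
    simp only [Fin.init] at hcc
    have h := hcol i.castSucc j.castSucc
    simp only [Fin.succ_castSucc] at h
    exact Fin.castSucc_injective _ (h hcc)

lemma goodW_last_mem_ext (c : Sym2 V → K) (E : Finset (V × V)) {ℓ : ℕ}
    (w' : Fin (ℓ + 2) → V) (hw' : w' ∈ goodW c E (ℓ + 1)) :
    w' (Fin.last (ℓ + 1)) ∈ extSet c E (Fin.init w') := by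
  have h1 : w' = Fin.snoc (Fin.init w') (w' (Fin.last (ℓ + 1))) := (Fin.snoc_init_self w').symm
  have h2 := goodW_init c E w' hw'
  rw [← goodW_snoc_mem c E (Fin.init w') h2]
  rwa [← h1]

lemma sum_goodW_succ (c : Sym2 V → K) (E : Finset (V × V)) {ℓ : ℕ}
    (f : (Fin (ℓ + 2) → V) → ℝ) :
    ∑ w' ∈ goodW c E (ℓ + 1), f w' =
      ∑ w ∈ goodW c E ℓ, ∑ u ∈ extSet c E w, f (Fin.snoc w u) := by
  rw [← Finset.sum_sigma (goodW c E ℓ) (fun w => extSet c E w)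
    (fun p => f (Fin.snoc p.1 p.2))]
  apply Finset.sum_nbij' (fun w' => (⟨Fin.init w', w' (Fin.last (ℓ + 1))⟩ :
      Σ _ : Fin (ℓ + 1) → V, V)) (fun p => Fin.snoc p.1 p.2)
  · intro w' hw'
    rw [Finset.mem_sigma]
    exact ⟨goodW_init c E w' hw', goodW_last_mem_ext c E w' hw'⟩
  · intro p hp
    rw [Finset.mem_sigma] at hp
    exact (goodW_snoc_mem c E p.1 hp.1 p.2).mpr hp.2
  · intro w' _
    exact Fin.snoc_init_self w'
  · intro p _
    refine Sigma.ext ?_ ?_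
    · exact Fin.init_snoc (α := fun _ => V) p.2 p.1
    · simp [Fin.snoc_last]
  · intro w' _
    rw [Fin.snoc_init_self w']

def wt (E : Finset (V × V)) {ℓ : ℕ} (w : Fin (ℓ + 1) → V) : ℝ :=
  ∏ i : Fin (ℓ + 1), if (i : ℕ) = 0 ∨ (i : ℕ) = ℓ then 1 else ((dF E (w i) : ℝ))⁻¹

lemma wt_nonneg (E : Finset (V × V)) {ℓ : ℕ} (w : Fin (ℓ + 1) → V) : 0 ≤ wt E w := by
  apply Finset.prod_nonneg
  intro i _
  split <;> positivity

lemma wt_one (E : Finset (V × V)) (w : Fin 2 → V) : wt E w = 1 := by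
  rw [wt]
  apply Finset.prod_eq_one
  intro i _
  have hi := i.isLt
  rw [if_pos]
  omega

lemma wt_snoc (E : Finset (V × V)) {ℓ : ℕ} (hℓ : 1 ≤ ℓ) (w : Fin (ℓ + 1) → V) (u : V) :
    wt E (Fin.snoc w u) = wt E w * ((dF E (w (Fin.last ℓ)) : ℝ))⁻¹ := by
  rw [wt, wt, Fin.prod_univ_castSucc]
  have hlast : (if ((Fin.last (ℓ+1) : Fin (ℓ+2)) : ℕ) = 0 ∨
      ((Fin.last (ℓ+1) : Fin (ℓ+2)) : ℕ) = ℓ + 1 then (1:ℝ)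
      else ((dF E ((Fin.snoc w u : Fin (ℓ+2) → V) (Fin.last (ℓ+1))) : ℝ))⁻¹) = 1 := by
    rw [if_pos]
    right
    simp [Fin.val_last]
  rw [hlast, mul_one]
  have hfac : ∀ i : Fin (ℓ + 1),
      (if ((i.castSucc : Fin (ℓ+2)) : ℕ) = 0 ∨ ((i.castSucc : Fin (ℓ+2)) : ℕ) = ℓ + 1
        then (1:ℝ) else ((dF E ((Fin.snoc w u : Fin (ℓ+2) → V) i.castSucc) : ℝ))⁻¹) =
      (if (i : ℕ) = 0 then (1:ℝ) else ((dF E (w i) : ℝ))⁻¹) := by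
    intro i
    rw [Fin.snoc_castSucc]
    congr 1
    simp only [Fin.coe_castSucc, eq_iff_iff]
    have := i.isLt
    constructor
    · rintro (h | h)
      · exact h
      · omega
    · exact Or.inl
  rw [Finset.prod_congr rfl (fun i _ => hfac i)]
  rw [← Finset.mul_prod_erase univ
    (fun i : Fin (ℓ+1) => if (i : ℕ) = 0 then (1:ℝ) else ((dF E (w i) : ℝ))⁻¹)
    (mem_univ (Fin.last ℓ)),
    ← Finset.mul_prod_erase univ
    (fun i : Fin (ℓ+1) => if (i : ℕ) = 0 ∨ (i : ℕ) = ℓ then (1:ℝ) else ((dF E (w i) : ℝ))⁻¹)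
    (mem_univ (Fin.last ℓ))]
  have h1 : (if ((Fin.last ℓ : Fin (ℓ+1)) : ℕ) = 0 then (1:ℝ)
      else ((dF E (w (Fin.last ℓ)) : ℝ))⁻¹) = ((dF E (w (Fin.last ℓ)) : ℝ))⁻¹ := by
    rw [if_neg]
    simp only [Fin.val_last]
    omega
  have h2 : (if ((Fin.last ℓ : Fin (ℓ+1)) : ℕ) = 0 ∨ ((Fin.last ℓ : Fin (ℓ+1)) : ℕ) = ℓ
      then (1:ℝ) else ((dF E (w (Fin.last ℓ)) : ℝ))⁻¹) = 1 := by
    rw [if_pos]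
    right
    simp [Fin.val_last]
  rw [h1, h2]
  have h3 : ∀ i ∈ (univ : Finset (Fin (ℓ+1))).erase (Fin.last ℓ),
      (if (i : ℕ) = 0 then (1:ℝ) else ((dF E (w i) : ℝ))⁻¹) =
      (if (i : ℕ) = 0 ∨ (i : ℕ) = ℓ then (1:ℝ) else ((dF E (w i) : ℝ))⁻¹) := by
    intro i hi
    have hne : i ≠ Fin.last ℓ := (Finset.mem_erase.mp hi).1
    have hval : (i : ℕ) ≠ ℓ := by
      intro h
      apply hne
      apply Fin.ext
      simp [h, Fin.val_last]
    congr 1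
    simp only [eq_iff_iff]
    constructor
    · exact Or.inl
    · rintro (h | h)
      · exact h
      · exact absurd h hval
  rw [Finset.prod_congr rfl h3]
  ring

lemma extSet_card_ge (G : SimpleGraph V) (c : Sym2 V → K)
    (hproper : ∀ u v w : V, G.Adj u v → G.Adj u w → v ≠ w → c s(u, v) ≠ c s(u, w))
    (E : Finset (V × V)) (hEG : ∀ p ∈ E, G.Adj p.1 p.2) {ℓ : ℕ} (w : Fin (ℓ + 1) → V) :
    (dF E (w (Fin.last ℓ)) : ℝ) - (2 * ℓ + 1) ≤ ((extSet c E w).card : ℝ) := by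
  set N := nbrF E (w (Fin.last ℓ)) with hN
  set P : V → Prop := fun u =>
    (∀ i, u ≠ w i) ∧ ∀ i : Fin ℓ, c s(w (Fin.last ℓ), u) ≠ c s(w i.castSucc, w i.succ)
    with hP
  have hsplit : (N.filter P).card + (N.filter (fun u => ¬ P u)).card = N.card :=
    Finset.card_filter_add_card_filter_not _
  have hbad : (N.filter (fun u => ¬ P u)).card ≤ (ℓ + 1) + ℓ := by
    have hsub : N.filter (fun u => ¬ P u) ⊆
        (N.filter fun u => ∃ i, u = w i) ∪
        (N.filter fun u => ∃ i : Fin ℓ,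
          c s(w (Fin.last ℓ), u) = c s(w i.castSucc, w i.succ)) := by
      intro u hu
      rw [mem_filter] at hu
      obtain ⟨huN, hnp⟩ := hu
      simp only [hP, not_and, not_forall, not_not, not_ne_iff] at hnp
      rw [Finset.mem_union, mem_filter, mem_filter]
      by_cases h : ∀ i, u ≠ w i
      · obtain ⟨i, hi⟩ := hnp h
        exact Or.inr ⟨huN, ⟨i, hi⟩⟩
      · push_neg at h
        exact Or.inl ⟨huN, h⟩
    have h1 : (N.filter fun u => ∃ i, u = w i).card ≤ ℓ + 1 := by
      have : (N.filter fun u => ∃ i, u = w i) ⊆ univ.image w := by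
        intro u hu
        obtain ⟨i, hi⟩ := (mem_filter.mp hu).2
        exact Finset.mem_image.mpr ⟨i, mem_univ i, hi.symm⟩
      calc _ ≤ (univ.image w).card := Finset.card_le_card this
        _ ≤ (univ : Finset (Fin (ℓ+1))).card := Finset.card_image_le
        _ = ℓ + 1 := by simp
    have h2 : (N.filter fun u => ∃ i : Fin ℓ,
        c s(w (Fin.last ℓ), u) = c s(w i.castSucc, w i.succ)).card ≤ ℓ := by
      have hsub2 : (N.filter fun u => ∃ i : Fin ℓ,
          c s(w (Fin.last ℓ), u) = c s(w i.castSucc, w i.succ)) ⊆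
          univ.biUnion (fun i : Fin ℓ =>
            N.filter fun u => c s(w (Fin.last ℓ), u) = c s(w i.castSucc, w i.succ)) := by
        intro u hu
        obtain ⟨i, hi⟩ := (mem_filter.mp hu).2
        exact Finset.mem_biUnion.mpr ⟨i, mem_univ i,
          mem_filter.mpr ⟨(mem_filter.mp hu).1, hi⟩⟩
      have hone : ∀ i : Fin ℓ,
          (N.filter fun u => c s(w (Fin.last ℓ), u) = c s(w i.castSucc, w i.succ)).card ≤ 1 := by
        intro i
        rw [Finset.card_le_one]
        intro u hu u' hu'
        rw [mem_filter] at hu hu'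
        by_contra hne
        have hadju : G.Adj (w (Fin.last ℓ)) u := hEG _ (mem_nbrF.mp hu.1)
        have hadju' : G.Adj (w (Fin.last ℓ)) u' := hEG _ (mem_nbrF.mp hu'.1)
        exact hproper (w (Fin.last ℓ)) u u' hadju hadju' hne (hu.2.trans hu'.2.symm)
      calc _ ≤ ∑ i : Fin ℓ, (N.filter fun u =>
            c s(w (Fin.last ℓ), u) = c s(w i.castSucc, w i.succ)).card :=
            Finset.card_le_card hsub2 |>.trans Finset.card_biUnion_le
        _ ≤ ∑ _i : Fin ℓ, 1 := Finset.sum_le_sum fun i _ => hone i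
        _ = ℓ := by simp
    calc _ ≤ _ := Finset.card_le_card hsub
      _ ≤ _ := Finset.card_union_le _ _
      _ ≤ (ℓ + 1) + ℓ := by omega
  have hNcard : N.card = dF E (w (Fin.last ℓ)) := card_nbrF E _
  have hext : (extSet c E w) = N.filter P := rfl
  have : dF E (w (Fin.last ℓ)) ≤ (extSet c E w).card + ((ℓ + 1) + ℓ) := by
    rw [hext, ← hNcard, ← hsplit]
    omega
  have := (Nat.cast_le (α := ℝ)).mpr this
  push_cast at this ⊢
  linarith

lemma dF_last_pos (c : Sym2 V → K) (E : Finset (V × V))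
    (hEsymm : ∀ p ∈ E, (p.2, p.1) ∈ E) {ℓ : ℕ} (hℓ : 1 ≤ ℓ)
    (w : Fin (ℓ + 1) → V) (hw : w ∈ goodW c E ℓ) : 0 < dF E (w (Fin.last ℓ)) := by
  simp only [goodW, mem_filter, mem_univ, true_and] at hw
  obtain ⟨hadj, -, -⟩ := hw
  set j : Fin ℓ := ⟨ℓ - 1, by omega⟩ with hj
  have hsucc : (j.succ : Fin (ℓ + 1)) = Fin.last ℓ := by
    apply Fin.ext
    simp [hj, Fin.val_succ, Fin.val_last]
    omega
  have h1 := hadj j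
  rw [hsucc] at h1
  have h2 : (w (Fin.last ℓ), w j.castSucc) ∈ E := hEsymm _ h1
  rw [dF, Finset.card_pos]
  exact ⟨(w (Fin.last ℓ), w j.castSucc), mem_filter.mpr ⟨h2, rfl⟩⟩

lemma card_goodW_one (G : SimpleGraph V) (c : Sym2 V → K) (E : Finset (V × V))
    (hEG : ∀ p ∈ E, G.Adj p.1 p.2) : (goodW c E 1).card = E.card := by
  apply Finset.card_bij' (fun w _ => ((w 0 : V), (w 1 : V)))
    (fun p _ => (fun i : Fin 2 => if i = 0 then p.1 else p.2))
  · intro w hw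
    simp only [goodW, mem_filter, mem_univ, true_and] at hw
    have := hw.1 0
    simpa using this
  · intro p hp
    simp only [goodW, mem_filter, mem_univ, true_and]
    have hne : p.1 ≠ p.2 := (hEG p hp).ne
    refine ⟨?_, ?_, ?_⟩
    · intro i
      have hi : i = 0 := Subsingleton.elim i 0
      subst hi
      simpa using hp
    · intro a b hab
      fin_cases a <;> fin_cases b <;> simp_all
    · intro i j _
      exact Subsingleton.elim i j
  · intro w hw
    simp only [goodW, mem_filter, mem_univ, true_and] at hw
    funext i
    fin_cases i <;> simp
  · intro p hp
    simp

lemma M_step (G : SimpleGraph V) (c : Sym2 V → K)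
    (hproper : ∀ u v w : V, G.Adj u v → G.Adj u w → v ≠ w → c s(u, v) ≠ c s(u, w))
    (E : Finset (V × V)) (hEG : ∀ p ∈ E, G.Adj p.1 p.2)
    (hEsymm : ∀ p ∈ E, (p.2, p.1) ∈ E)
    (θ : ℝ) (hdegE : ∀ v, dF E v = 0 ∨ θ ≤ (dF E v : ℝ))
    {ℓ : ℕ} (hℓ : 1 ≤ ℓ) (hθℓ : 2 * (2 * (ℓ : ℝ) + 1) ≤ θ) :
    (∑ w ∈ goodW c E ℓ, wt E w) / 2 ≤ ∑ w' ∈ goodW c E (ℓ + 1), wt E w' := by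
  rw [sum_goodW_succ c E (wt E)]
  have key : ∀ w ∈ goodW c E ℓ,
      wt E w / 2 ≤ ∑ u ∈ extSet c E w, wt E (Fin.snoc w u) := by
    intro w hw
    have hpos : 0 < dF E (w (Fin.last ℓ)) := dF_last_pos c E hEsymm hℓ w hw
    have hθd : θ ≤ (dF E (w (Fin.last ℓ)) : ℝ) := by
      rcases hdegE (w (Fin.last ℓ)) with h | h
      · omega
      · exact h
    have hcard : (dF E (w (Fin.last ℓ)) : ℝ) / 2 ≤ ((extSet c E w).card : ℝ) := by
      have h1 := extSet_card_ge G c hproper E hEG w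
      linarith
    have hsum : ∑ u ∈ extSet c E w, wt E (Fin.snoc w u) =
        ((extSet c E w).card : ℝ) * (wt E w * ((dF E (w (Fin.last ℓ)) : ℝ))⁻¹) := by
      rw [Finset.sum_congr rfl (fun u _ => wt_snoc E hℓ w u), Finset.sum_const,
        nsmul_eq_mul]
    rw [hsum]
    have hwt := wt_nonneg E w
    have hdpos : (0:ℝ) < (dF E (w (Fin.last ℓ)) : ℝ) := by exact_mod_cast hpos
    have hhalf : (1:ℝ) / 2 ≤ ((extSet c E w).card : ℝ) * ((dF E (w (Fin.last ℓ)) : ℝ))⁻¹ := by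
      have h2 : (1:ℝ)/2 = ((dF E (w (Fin.last ℓ)) : ℝ) / 2) * ((dF E (w (Fin.last ℓ)) : ℝ))⁻¹ := by
        field_simp
      rw [h2]
      exact mul_le_mul_of_nonneg_right hcard (by positivity)
    calc wt E w / 2 = (1 / 2) * wt E w := by ring
      _ ≤ (((extSet c E w).card : ℝ) * ((dF E (w (Fin.last ℓ)) : ℝ))⁻¹) * wt E w := by
          apply mul_le_mul_of_nonneg_right hhalf hwt
      _ = ((extSet c E w).card : ℝ) * (wt E w * ((dF E (w (Fin.last ℓ)) : ℝ))⁻¹) := by ring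
  calc (∑ w ∈ goodW c E ℓ, wt E w) / 2 = ∑ w ∈ goodW c E ℓ, wt E w / 2 := by
        rw [Finset.sum_div]
    _ ≤ _ := Finset.sum_le_sum key

lemma internal_card {k : ℕ} (hk : 1 ≤ k) :
    (Finset.filter (fun i : Fin (k + 1) => ¬((i : ℕ) = 0 ∨ (i : ℕ) = k)) univ).card
      = k - 1 := by
  have hset : (Finset.filter (fun i : Fin (k + 1) => ¬((i : ℕ) = 0 ∨ (i : ℕ) = k)) univ) =
      univ \ {(0 : Fin (k + 1)), Fin.last k} := by
    ext i
    simp only [mem_filter, mem_univ, true_and, Finset.mem_sdiff, Finset.mem_insert,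
      Finset.mem_singleton, not_or]
    constructor
    · rintro ⟨h0, hk'⟩
      refine ⟨?_, ?_⟩
      · intro h; apply h0; rw [h]; rfl
      · intro h; apply hk'; rw [h]; simp [Fin.val_last]
    · rintro ⟨h0, hk'⟩
      constructor
      · intro h; apply h0; apply Fin.ext; simpa using h
      · intro h; apply hk'; apply Fin.ext; simp [Fin.val_last]; exact h
  rw [hset, Finset.card_sdiff_of_subset (Finset.subset_univ _)]
  have h2 : ({(0 : Fin (k + 1)), Fin.last k} : Finset (Fin (k+1))).card = 2 := by
    rw [Finset.card_insert_of_notMem, Finset.card_singleton]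
    simp only [Finset.mem_singleton]
    intro h
    have := congrArg Fin.val h
    simp [Fin.val_last] at this
    omega
  rw [h2, Finset.card_univ, Fintype.card_fin]
  omega

lemma wt_le_pow (c : Sym2 V → K) (E : Finset (V × V))
    (hEsymm : ∀ p ∈ E, (p.2, p.1) ∈ E)
    (θ : ℝ) (hθpos : 0 < θ) (hdegE : ∀ v, dF E v = 0 ∨ θ ≤ (dF E v : ℝ))
    {k : ℕ} (hk : 1 ≤ k) (w : Fin (k + 1) → V) (hw : w ∈ goodW c E k) :
    wt E w ≤ (θ⁻¹) ^ (k - 1) := by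
  simp only [goodW, mem_filter, mem_univ, true_and] at hw
  obtain ⟨hadj, -, -⟩ := hw
  have hbound : ∀ i : Fin (k + 1), ¬((i : ℕ) = 0 ∨ (i : ℕ) = k) →
      ((dF E (w i) : ℝ))⁻¹ ≤ θ⁻¹ := by
    intro i hi
    push_neg at hi
    have hilt := i.isLt
    set j : Fin k := ⟨(i : ℕ) - 1, by omega⟩ with hj
    have hsucc : (j.succ : Fin (k + 1)) = i := by
      apply Fin.ext
      simp [hj, Fin.val_succ]
      omega
    have h1 := hadj j
    rw [hsucc] at h1
    have h2 : (w i, w j.castSucc) ∈ E := hEsymm _ h1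
    have hpos : 0 < dF E (w i) := by
      rw [dF, Finset.card_pos]
      exact ⟨(w i, w j.castSucc), mem_filter.mpr ⟨h2, rfl⟩⟩
    have hθd : θ ≤ (dF E (w i) : ℝ) := by
      rcases hdegE (w i) with h | h
      · omega
      · exact h
    exact inv_anti₀ hθpos hθd
  calc wt E w ≤ ∏ i : Fin (k + 1), if (i : ℕ) = 0 ∨ (i : ℕ) = k then 1 else θ⁻¹ := by
        apply Finset.prod_le_prod
        · intro i _
          split <;> positivity
        · intro i _
          by_cases h : (i : ℕ) = 0 ∨ (i : ℕ) = k
          · rw [if_pos h, if_pos h]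
          · rw [if_neg h, if_neg h]
            exact hbound i h
    _ = (θ⁻¹) ^ (k - 1) := by
        rw [Finset.prod_ite, Finset.prod_const_one, one_mul, Finset.prod_const,
          internal_card hk]

lemma goodW_count (G : SimpleGraph V) (c : Sym2 V → K)
    (hproper : ∀ u v w : V, G.Adj u v → G.Adj u w → v ≠ w → c s(u, v) ≠ c s(u, w))
    (E : Finset (V × V)) (hEG : ∀ p ∈ E, G.Adj p.1 p.2)
    (hEsymm : ∀ p ∈ E, (p.2, p.1) ∈ E)
    (θ : ℝ) (hdegE : ∀ v, dF E v = 0 ∨ θ ≤ (dF E v : ℝ))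
    {k : ℕ} (hk : 1 ≤ k) (hθk : 2 * (2 * (k : ℝ) - 1) ≤ θ) :
    (E.card : ℝ) * (θ / 2) ^ (k - 1) ≤ ((goodW c E k).card : ℝ) := by
  have hθpos : 0 < θ := by
    have : (1:ℝ) ≤ (k:ℝ) := by exact_mod_cast hk
    linarith
  -- chain : E.card / 2^j ≤ M (j+1) for j ≤ k-1
  have chain : ∀ j : ℕ, j + 1 ≤ k →
      (E.card : ℝ) / 2 ^ j ≤ ∑ w ∈ goodW c E (j + 1), wt E w := by
    intro j
    induction j with
    | zero =>
      intro _
      have h1 : ∑ w ∈ goodW c E 1, wt E w = ((goodW c E 1).card : ℝ) := by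
        rw [Finset.sum_congr rfl (fun w _ => wt_one E w), Finset.sum_const, nsmul_eq_mul,
          mul_one]
      rw [h1, card_goodW_one G c E hEG]
      simp
    | succ m ih =>
      intro hm
      have h0 : m + 1 ≤ k := by omega
      have h1 := ih h0
      have hθm : 2 * (2 * ((m + 1 : ℕ) : ℝ) + 1) ≤ θ := by
        have h9 : ((m + 1 + 1 : ℕ) : ℝ) ≤ (k : ℝ) := by exact_mod_cast hm
        push_cast at h9 ⊢
        linarith
      have h2 := M_step G c hproper E hEG hEsymm θ hdegE (by omega : 1 ≤ m + 1) hθm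
      calc (E.card : ℝ) / 2 ^ (m + 1) = ((E.card : ℝ) / 2 ^ m) / 2 := by
            rw [pow_succ]; ring
        _ ≤ (∑ w ∈ goodW c E (m + 1), wt E w) / 2 := by linarith
        _ ≤ _ := h2
  have hM := chain (k - 1) (by omega)
  have hkk : k - 1 + 1 = k := by omega
  rw [hkk] at hM
  have hup : ∑ w ∈ goodW c E k, wt E w ≤ ((goodW c E k).card : ℝ) * (θ⁻¹) ^ (k - 1) := by
    calc ∑ w ∈ goodW c E k, wt E w ≤ ∑ _w ∈ goodW c E k, (θ⁻¹) ^ (k - 1) :=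
          Finset.sum_le_sum (fun w hw => wt_le_pow c E hEsymm θ hθpos hdegE hk w hw)
      _ = ((goodW c E k).card : ℝ) * (θ⁻¹) ^ (k - 1) := by
          rw [Finset.sum_const, nsmul_eq_mul]
  have hfin : (E.card : ℝ) / 2 ^ (k - 1) ≤ ((goodW c E k).card : ℝ) * (θ⁻¹) ^ (k - 1) :=
    le_trans hM hup
  have hθne : θ ≠ 0 := ne_of_gt hθpos
  have hpows : (θ⁻¹) ^ (k - 1) * θ ^ (k - 1) = 1 := by
    rw [inv_pow]
    field_simp
  calc (E.card : ℝ) * (θ / 2) ^ (k - 1)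
      = ((E.card : ℝ) / 2 ^ (k - 1)) * θ ^ (k - 1) := by rw [div_pow]; ring
    _ ≤ (((goodW c E k).card : ℝ) * (θ⁻¹) ^ (k - 1)) * θ ^ (k - 1) :=
        mul_le_mul_of_nonneg_right hfin (by positivity)
    _ = ((goodW c E k).card : ℝ) := by rw [mul_assoc, hpows, mul_one]

def orientedE (G : SimpleGraph V) : Finset (V × V) :=
  univ.filter fun p => G.Adj p.1 p.2

lemma card_eq_sum_dF (E : Finset (V × V)) : E.card = ∑ v, dF E v := by
  exact Finset.card_eq_sum_card_fiberwise (fun p _ => mem_univ p.1)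

lemma dF_orientedE (G : SimpleGraph V) (v : V) : dF (orientedE G) v = G.degree v := by
  rw [← SimpleGraph.card_neighborFinset_eq_degree, ← card_nbrF]
  congr 1
  ext u
  rw [mem_nbrF, SimpleGraph.mem_neighborFinset]
  simp [orientedE]

lemma card_orientedE (G : SimpleGraph V) :
    (orientedE G).card = 2 * G.edgeFinset.card := by
  rw [← SimpleGraph.sum_degrees_eq_twice_card_edges, card_eq_sum_dF]
  exact Finset.sum_congr rfl fun v _ => dF_orientedE G v

lemma card_filter_snd (E : Finset (V × V)) (hsymm : ∀ p ∈ E, (p.2, p.1) ∈ E) (v : V) :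
    (E.filter fun p => p.2 = v).card = dF E v := by
  apply Finset.card_bij (fun p _ => (p.2, p.1))
  · rintro ⟨a, b⟩ hp
    simp only [mem_filter] at hp ⊢
    exact ⟨hsymm _ hp.1, hp.2⟩
  · rintro ⟨a, b⟩ ha ⟨a', b'⟩ hb h
    simp only [Prod.mk.injEq] at h
    exact Prod.ext h.2 h.1
  · rintro ⟨a, b⟩ hp
    simp only [mem_filter, dF] at hp
    refine ⟨(b, a), ?_, rfl⟩
    simp only [mem_filter]
    exact ⟨hsymm _ hp.1, hp.2⟩

/-- support of an oriented edge-finset -/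
def suppF (E : Finset (V × V)) : Finset V := univ.filter fun v => dF E v ≠ 0

lemma peelAux (θ : ℝ) (hθ : 0 ≤ θ) :
    ∀ m : ℕ, ∀ D : Finset (V × V), (∀ p ∈ D, (p.2, p.1) ∈ D) → (suppF D).card ≤ m →
    ∃ E, E ⊆ D ∧ (∀ p ∈ E, (p.2, p.1) ∈ E) ∧
      (∀ v, dF E v = 0 ∨ θ ≤ (dF E v : ℝ)) ∧
      (D.card : ℝ) ≤ (E.card : ℝ) + 2 * θ * m := by
  intro m
  induction m with
  | zero =>
    intro D hsymm hsupp
    refine ⟨D, Finset.Subset.refl _, hsymm, ?_, by simp⟩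
    intro v
    left
    by_contra h
    have : v ∈ suppF D := by simp [suppF, h]
    have he : suppF D = ∅ := Finset.card_eq_zero.mp (Nat.le_zero.mp hsupp)
    rw [he] at this
    exact absurd this (Finset.notMem_empty v)
  | succ m ih =>
    intro D hsymm hsupp
    by_cases hall : ∀ v, dF D v = 0 ∨ θ ≤ (dF D v : ℝ)
    · refine ⟨D, Finset.Subset.refl _, hsymm, hall, ?_⟩
      have : (0:ℝ) ≤ 2 * θ * (m+1 : ℕ) := by positivity
      linarith
    · push_neg at hall
      obtain ⟨v, hv0, hvθ⟩ := hall
      set D' := D.filter (fun p => p.1 ≠ v ∧ p.2 ≠ v) with hD'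
      have hsub : D' ⊆ D := Finset.filter_subset _ _
      have hsymm' : ∀ p ∈ D', (p.2, p.1) ∈ D' := by
        rintro ⟨a, b⟩ hp
        simp only [hD', mem_filter] at hp ⊢
        exact ⟨hsymm _ hp.1, hp.2.2, hp.2.1⟩
      have hsupp' : (suppF D').card ≤ m := by
        have h1 : suppF D' ⊆ (suppF D).erase v := by
          intro u hu
          simp only [suppF, mem_filter, mem_univ, true_and] at hu
          rw [Finset.mem_erase]
          constructor
          · rintro rfl
            apply hu
            rw [dF, Finset.card_eq_zero, Finset.filter_eq_empty_iff]
            rintro ⟨a, b⟩ hp h1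
            simp only [hD', mem_filter] at hp
            exact hp.2.1 h1
          · simp only [suppF, mem_filter, mem_univ, true_and]
            intro h0
            apply hu
            rw [dF, Finset.card_eq_zero, Finset.filter_eq_empty_iff]
            rintro p hp h1
            rw [dF, Finset.card_eq_zero, Finset.filter_eq_empty_iff] at h0
            exact h0 (hsub hp) h1
        have h2 : v ∈ suppF D := by simp [suppF, hv0]
        calc (suppF D').card ≤ ((suppF D).erase v).card := Finset.card_le_card h1
          _ = (suppF D).card - 1 := Finset.card_erase_of_mem h2
          _ ≤ m := by omega
      obtain ⟨E, hE1, hE2, hE3, hE4⟩ := ih D' hsymm' hsupp'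
      refine ⟨E, hE1.trans hsub, hE2, hE3, ?_⟩
      -- card D ≤ card D' + 2θ
      have hsplit : (D.card : ℝ) ≤ (D'.card : ℝ) + 2 * θ := by
        have h1 : D.card = D'.card + (D.filter (fun p => ¬(p.1 ≠ v ∧ p.2 ≠ v))).card := by
          rw [hD']
          exact (Finset.card_filter_add_card_filter_not _).symm
        have h2 : (D.filter (fun p => ¬(p.1 ≠ v ∧ p.2 ≠ v))).card ≤
            (D.filter (fun p => p.1 = v)).card + (D.filter (fun p => p.2 = v)).card := by
          have : (D.filter (fun p => ¬(p.1 ≠ v ∧ p.2 ≠ v))) ⊆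
              (D.filter (fun p => p.1 = v)) ∪ (D.filter (fun p => p.2 = v)) := by
            intro p hp
            simp only [mem_filter, not_and_or, not_ne_iff] at hp
            rw [Finset.mem_union]
            rcases hp.2 with h | h
            · exact Or.inl (by simp [mem_filter, hp.1, h])
            · exact Or.inr (by simp [mem_filter, hp.1, h])
          calc _ ≤ _ := Finset.card_le_card this
            _ ≤ _ := Finset.card_union_le _ _
        have h3 : (D.filter (fun p => p.2 = v)).card = dF D v := card_filter_snd D hsymm v
        have h4 : ((D.filter (fun p => p.1 = v)).card : ℝ) ≤ θ := le_of_lt hvθ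
        have h5 : ((D.filter (fun p => p.2 = v)).card : ℝ) ≤ θ := by
          rw [h3]; exact le_of_lt hvθ
        have := h1
        have hcast : (D.card : ℝ) = (D'.card : ℝ) +
            ((D.filter (fun p => ¬(p.1 ≠ v ∧ p.2 ≠ v))).card : ℝ) := by
          exact_mod_cast congrArg (Nat.cast : ℕ → ℝ) h1
        have h2' : ((D.filter (fun p => ¬(p.1 ≠ v ∧ p.2 ≠ v))).card : ℝ) ≤
            ((D.filter (fun p => p.1 = v)).card : ℝ) +
            ((D.filter (fun p => p.2 = v)).card : ℝ) := by exact_mod_cast h2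
        linarith
      have : (2:ℝ) * θ * (m+1:ℕ) = 2 * θ * m + 2 * θ := by push_cast; ring
      linarith

lemma peel (θ : ℝ) (hθ : 0 ≤ θ) (D : Finset (V × V)) (hsymm : ∀ p ∈ D, (p.2, p.1) ∈ D) :
    ∃ E, E ⊆ D ∧ (∀ p ∈ E, (p.2, p.1) ∈ E) ∧
      (∀ v, dF E v = 0 ∨ θ ≤ (dF E v : ℝ)) ∧
      (D.card : ℝ) ≤ (E.card : ℝ) + 2 * θ * (Fintype.card V) := by
  exact peelAux θ hθ (Fintype.card V) D hsymm (by
    rw [← Finset.card_univ]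
    exact Finset.card_le_card (Finset.subset_univ _))

def ballF (G : SimpleGraph V) (S : Finset V) : ℕ → Finset V
  | 0 => S
  | r + 1 => ballF G S r ∪ (ballF G S r).biUnion (fun v => G.neighborFinset v)

lemma ballF_subset_succ (G : SimpleGraph V) (S : Finset V) (r : ℕ) :
    ballF G S r ⊆ ballF G S (r + 1) := by
  intro v hv
  simp only [ballF, Finset.mem_union]
  exact Or.inl hv

lemma ballF_mono (G : SimpleGraph V) (S : Finset V) {r r' : ℕ} (h : r ≤ r') :
    ballF G S r ⊆ ballF G S r' := by
  induction r' with
  | zero => rw [Nat.le_zero.mp h]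
  | succ m ih =>
    rcases Nat.lt_or_ge r (m+1) with h' | h'
    · exact (ih (by omega)).trans (ballF_subset_succ G S m)
    · have : r = m + 1 := by omega
      rw [this]

lemma ballF_card (G : SimpleGraph V) (S : Finset V) (μd : ℝ) (hμd : 0 ≤ μd)
    (hdeg : ∀ v : V, (G.degree v : ℝ) ≤ μd) (r : ℕ) :
    ((ballF G S r).card : ℝ) ≤ (S.card : ℝ) * (1 + μd) ^ r := by
  induction r with
  | zero => simp [ballF]
  | succ m ih =>
    have h1 : (ballF G S (m+1)).card ≤ (ballF G S m).card +
        ((ballF G S m).biUnion (fun v => G.neighborFinset v)).card := by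
      simpa [ballF] using Finset.card_union_le _ _
    have h2 : (((ballF G S m).biUnion (fun v => G.neighborFinset v)).card : ℝ) ≤
        ((ballF G S m).card : ℝ) * μd := by
      calc (((ballF G S m).biUnion (fun v => G.neighborFinset v)).card : ℝ)
          ≤ ((∑ v ∈ ballF G S m, (G.neighborFinset v).card : ℕ) : ℝ) := by
            exact_mod_cast Finset.card_biUnion_le
        _ = ∑ v ∈ ballF G S m, ((G.degree v : ℕ) : ℝ) := by
            push_cast
            exact Finset.sum_congr rfl fun v _ => by
              rw [SimpleGraph.card_neighborFinset_eq_degree]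
        _ ≤ ∑ _v ∈ ballF G S m, μd := Finset.sum_le_sum fun v _ => hdeg v
        _ = ((ballF G S m).card : ℝ) * μd := by rw [Finset.sum_const, nsmul_eq_mul]
    have h1' : ((ballF G S (m+1)).card : ℝ) ≤ ((ballF G S m).card : ℝ) +
        (((ballF G S m).biUnion (fun v => G.neighborFinset v)).card : ℝ) := by
      exact_mod_cast h1
    have hball : ((ballF G S (m+1)).card : ℝ) ≤ ((ballF G S m).card : ℝ) * (1 + μd) := by
      linarith
    calc ((ballF G S (m+1)).card : ℝ) ≤ ((ballF G S m).card : ℝ) * (1 + μd) := hball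
      _ ≤ (S.card : ℝ) * (1 + μd) ^ m * (1 + μd) := by
          apply mul_le_mul_of_nonneg_right ih (by linarith)
      _ = (S.card : ℝ) * (1 + μd) ^ (m+1) := by ring

lemma ballF_walk (G : SimpleGraph V) (S : Finset V) {u v : V} (w : G.Walk u v) {r : ℕ}
    (hu : u ∈ ballF G S r) : v ∈ ballF G S (r + w.length) := by
  induction w generalizing r with
  | nil => simpa using hu
  | @cons a b v' h p ih =>
    have hb : b ∈ ballF G S (r + 1) := by
      simp only [ballF, Finset.mem_union, Finset.mem_biUnion]
      exact Or.inr ⟨a, hu, by simpa [SimpleGraph.mem_neighborFinset] using h⟩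
    have := ih hb
    have hlen : r + 1 + p.length = r + (SimpleGraph.Walk.cons h p).length := by
      simp [SimpleGraph.Walk.length_cons]; omega
    rwa [hlen] at this

def walkF (G : SimpleGraph V) (k : ℕ) : Finset (Fin (k + 1) → V) :=
  univ.filter fun w => ∀ i : Fin k, G.Adj (w i.castSucc) (w i.succ)

def extCnt (G : SimpleGraph V) (k : ℕ) (w : Fin (k + 1) → V) : ℕ :=
  Nat.card {f : ZMod (2 * k) → V //
      (∀ x, G.Adj (f x) (f (x + 1))) ∧
      ∀ ℓ : Fin (k + 1), f ((ℓ : ℕ) : ZMod (2 * k)) = w ℓ}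

lemma sum_extCnt (G : SimpleGraph V) (k : ℕ) (hk : 0 < k) :
    ∑ w ∈ walkF G k, extCnt G k w =
      Nat.card {f : ZMod (2 * k) → V // ∀ i, G.Adj (f i) (f (i + 1))} := by
  haveI : NeZero (2 * k) := ⟨by omega⟩
  set ρ : (ZMod (2 * k) → V) → (Fin (k + 1) → V) :=
    fun f ℓ => f ((ℓ : ℕ) : ZMod (2 * k)) with hρ
  have hmem : ∀ f ∈ univ.filter (fun f : ZMod (2 * k) → V => ∀ i, G.Adj (f i) (f (i + 1))),
      ρ f ∈ walkF G k := by
    intro f hf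
    simp only [mem_filter, mem_univ, true_and] at hf
    simp only [walkF, mem_filter, mem_univ, true_and]
    intro i
    have := hf (((i : ℕ) : ZMod (2 * k)))
    have h1 : ((i.castSucc : ℕ) : ZMod (2 * k)) = ((i : ℕ) : ZMod (2 * k)) := by
      simp [Fin.coe_castSucc]
    have h2 : ((i.succ : ℕ) : ZMod (2 * k)) = ((i : ℕ) : ZMod (2 * k)) + 1 := by
      simp [Fin.val_succ]
    simp only [hρ, h1, h2]
    exact this
  rw [Nat.card_eq_fintype_card, Fintype.card_subtype,
    Finset.card_eq_sum_card_fiberwise hmem]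
  apply Finset.sum_congr rfl
  intro w _
  rw [extCnt, Nat.card_eq_fintype_card, Fintype.card_subtype]
  congr 1
  rw [Finset.filter_filter]
  apply Finset.filter_congr
  intro f _
  constructor
  · rintro ⟨h1, h2⟩
    exact ⟨h1, funext fun ℓ => h2 ℓ⟩
  · rintro ⟨h1, h2⟩
    exact ⟨h1, fun ℓ => congrFun h2 ℓ⟩

lemma markov (G : SimpleGraph V) (k : ℕ) (hk : 0 < k) (q homR : ℝ) (hq : 0 < q)
    (hhom : ((Nat.card {f : ZMod (2 * k) → V // ∀ i, G.Adj (f i) (f (i + 1))} : ℕ) : ℝ)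
      ≤ homR) :
    (((walkF G k).filter (fun w => ¬((extCnt G k w : ℝ) ≤ q))).card : ℝ) ≤ homR / q := by
  set B := (walkF G k).filter (fun w => ¬((extCnt G k w : ℝ) ≤ q)) with hB
  have h1 : (B.card : ℝ) * q ≤ ∑ w ∈ B, ((extCnt G k w : ℕ) : ℝ) := by
    calc (B.card : ℝ) * q = ∑ _w ∈ B, q := by rw [Finset.sum_const, nsmul_eq_mul]
      _ ≤ ∑ w ∈ B, ((extCnt G k w : ℕ) : ℝ) := by
          apply Finset.sum_le_sum
          intro w hw
          rw [hB, mem_filter] at hw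
          exact le_of_not_ge hw.2
  have h2 : ∑ w ∈ B, ((extCnt G k w : ℕ) : ℝ) ≤ ∑ w ∈ walkF G k, ((extCnt G k w : ℕ) : ℝ) := by
    apply Finset.sum_le_sum_of_subset_of_nonneg (Finset.filter_subset _ _)
    intro w _ _
    positivity
  have h3 : ∑ w ∈ walkF G k, ((extCnt G k w : ℕ) : ℝ) ≤ homR := by
    rw [← Nat.cast_sum, sum_extCnt G k hk]
    exact hhom
  rw [le_div_iff₀ hq]
  linarith

lemma cbad_card (G : SimpleGraph V) (c : Sym2 V → K) (usedC : Finset K) (colBound : ℝ)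
    (hcB : 0 ≤ colBound)
    (hcol : ∀ x : K, ((Nat.card {e : Sym2 V // e ∈ G.edgeSet ∧ c e = x}) : ℝ) ≤ colBound) :
    ((((orientedE G).filter fun p => c s(p.1, p.2) ∈ usedC).card : ℝ)) ≤
      (usedC.card : ℝ) * (2 * colBound) := by
  set S := (orientedE G).filter fun p => c s(p.1, p.2) ∈ usedC with hS
  have hmem : ∀ p ∈ S, c s(p.1, p.2) ∈ usedC := fun p hp => (mem_filter.mp hp).2
  have hsplit : S.card = ∑ κ ∈ usedC, (S.filter fun p => c s(p.1, p.2) = κ).card :=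
    Finset.card_eq_sum_card_fiberwise hmem
  have hper : ∀ κ ∈ usedC, ((S.filter fun p => c s(p.1, p.2) = κ).card : ℝ) ≤ 2 * colBound := by
    intro κ _
    set T := S.filter fun p => c s(p.1, p.2) = κ with hT
    have hfib : ∀ b ∈ T.image (fun p => s(p.1, p.2)),
        (T.filter fun p => s(p.1, p.2) = b).card ≤ 2 := by
      intro b _
      induction b using Sym2.ind with
      | _ x y =>
        have : (T.filter fun p => s(p.1, p.2) = s(x, y)) ⊆ {(x, y), (y, x)} := by
          intro p hp
          have := (mem_filter.mp hp).2
          rw [Sym2.eq_iff] at this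
          simp only [Finset.mem_insert, Finset.mem_singleton]
          rcases this with ⟨h1, h2⟩ | ⟨h1, h2⟩
          · left; exact Prod.ext h1 h2
          · right; exact Prod.ext h1 h2
        calc _ ≤ ({(x, y), (y, x)} : Finset (V × V)).card := Finset.card_le_card this
          _ ≤ 2 := Finset.card_insert_le _ _ |>.trans (by simp)
    have h1 : T.card ≤ 2 * (T.image (fun p => s(p.1, p.2))).card :=
      Finset.card_le_mul_card_image T 2 hfib
    have h2 : T.image (fun p => s(p.1, p.2)) ⊆
        univ.filter (fun e : Sym2 V => e ∈ G.edgeSet ∧ c e = κ) := by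
      intro b hb
      rw [Finset.mem_image] at hb
      obtain ⟨p, hp, rfl⟩ := hb
      have hp1 : p ∈ orientedE G := Finset.filter_subset _ _ ((Finset.filter_subset _ _) hp)
      have hadj : G.Adj p.1 p.2 := by
        simp only [orientedE, mem_filter] at hp1; exact hp1.2
      have hc : c s(p.1, p.2) = κ := (mem_filter.mp hp).2
      simp only [mem_filter, mem_univ, true_and]
      exact ⟨(SimpleGraph.mem_edgeSet G).mpr hadj, hc⟩
    have h3 : ((univ.filter (fun e : Sym2 V => e ∈ G.edgeSet ∧ c e = κ)).card : ℝ) ≤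
        colBound := by
      have := hcol κ
      rwa [Nat.card_eq_fintype_card, Fintype.card_subtype] at this
    have h4 : ((T.image (fun p => s(p.1, p.2))).card : ℝ) ≤ colBound :=
      le_trans (by exact_mod_cast Nat.cast_le.mpr (Finset.card_le_card h2)) h3
    calc (T.card : ℝ) ≤ 2 * ((T.image (fun p => s(p.1, p.2))).card : ℝ) := by
          exact_mod_cast h1
      _ ≤ 2 * colBound := by linarith
  calc (S.card : ℝ) = ∑ κ ∈ usedC, ((S.filter fun p => c s(p.1, p.2) = κ).card : ℝ) := by
        rw [hsplit]; push_cast; ring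
    _ ≤ ∑ _κ ∈ usedC, 2 * colBound := Finset.sum_le_sum hper
    _ = (usedC.card : ℝ) * (2 * colBound) := by rw [Finset.sum_const, nsmul_eq_mul]

lemma bbad_card (G : SimpleGraph V) (B : Finset V) (μd : ℝ) (hμd : 0 ≤ μd)
    (hdeg : ∀ v : V, (G.degree v : ℝ) ≤ μd) :
    ((((orientedE G).filter fun p => p.1 ∈ B ∨ p.2 ∈ B).card : ℝ)) ≤
      2 * (B.card : ℝ) * μd := by
  have hsub : ((orientedE G).filter fun p => p.1 ∈ B ∨ p.2 ∈ B) ⊆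
      ((orientedE G).filter fun p => p.1 ∈ B) ∪ ((orientedE G).filter fun p => p.2 ∈ B) := by
    intro p hp
    rw [Finset.mem_union]
    rcases (mem_filter.mp hp).2 with h | h
    · exact Or.inl (mem_filter.mpr ⟨(mem_filter.mp hp).1, h⟩)
    · exact Or.inr (mem_filter.mpr ⟨(mem_filter.mp hp).1, h⟩)
  have key : ∀ (pr : (V × V) → V), (pr = Prod.fst ∨ pr = Prod.snd) →
      (((orientedE G).filter fun p => pr p ∈ B).card : ℝ) ≤ (B.card : ℝ) * μd := by
    intro pr hpr
    have hmem : ∀ p ∈ (orientedE G).filter fun p => pr p ∈ B, pr p ∈ B :=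
      fun p hp => (mem_filter.mp hp).2
    have hsplit := Finset.card_eq_sum_card_fiberwise hmem
    have hper : ∀ v ∈ B,
        ((((orientedE G).filter fun p => pr p ∈ B).filter fun p => pr p = v).card : ℝ)
          ≤ μd := by
      intro v hv
      have hss : (((orientedE G).filter fun p => pr p ∈ B).filter fun p => pr p = v) ⊆
          ((orientedE G).filter fun p => pr p = v) := by
        intro p hp
        have h1 := mem_filter.mp hp
        have h2 := mem_filter.mp h1.1
        exact mem_filter.mpr ⟨h2.1, h1.2⟩
      have hc : ((orientedE G).filter fun p => pr p = v).card = G.degree v := by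
        rcases hpr with rfl | rfl
        · exact dF_orientedE G v
        · -- in-degree equals degree by symmetry of Adj
          rw [← dF_orientedE G v]
          apply Finset.card_bij (fun p _ => (p.2, p.1))
          · rintro ⟨a, b⟩ hp
            simp only [mem_filter, orientedE, mem_univ, true_and] at hp ⊢
            exact ⟨hp.1.symm, hp.2⟩
          · rintro ⟨a, b⟩ _ ⟨a', b'⟩ _ h
            simp only [Prod.mk.injEq] at h
            exact Prod.ext h.2 h.1
          · rintro ⟨a, b⟩ hp
            simp only [mem_filter, orientedE, mem_univ, true_and, dF] at hp
            exact ⟨(b, a), by simp only [mem_filter, orientedE, mem_univ, true_and]; exact ⟨hp.1.symm, hp.2⟩, rfl⟩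
      calc _ ≤ ((((orientedE G).filter fun p => pr p = v).card : ℕ) : ℝ) := by
            exact_mod_cast Nat.cast_le.mpr (Finset.card_le_card hss)
        _ = (G.degree v : ℝ) := by rw [hc]
        _ ≤ μd := hdeg v
    calc (((orientedE G).filter fun p => pr p ∈ B).card : ℝ)
        = ∑ v ∈ B, ((((orientedE G).filter fun p => pr p ∈ B).filter
            fun p => pr p = v).card : ℝ) := by rw [hsplit]; push_cast; ring
      _ ≤ ∑ _v ∈ B, μd := Finset.sum_le_sum hper
      _ = (B.card : ℝ) * μd := by rw [Finset.sum_const, nsmul_eq_mul]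
  have h1 := key Prod.fst (Or.inl rfl)
  have h2 := key Prod.snd (Or.inr rfl)
  have h3 : ((((orientedE G).filter fun p => p.1 ∈ B ∨ p.2 ∈ B).card : ℝ)) ≤
      (((orientedE G).filter fun p => p.1 ∈ B).card : ℝ) +
      (((orientedE G).filter fun p => p.2 ∈ B).card : ℝ) := by
    calc _ ≤ (((((orientedE G).filter fun p => p.1 ∈ B) ∪
          ((orientedE G).filter fun p => p.2 ∈ B)).card : ℕ) : ℝ) := by
          exact_mod_cast Nat.cast_le.mpr (Finset.card_le_card hsub)
      _ ≤ _ := by exact_mod_cast Finset.card_union_le _ _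
  linarith

end NicePathsAux

noncomputable section StepMain

variable {V K : Type*} [Fintype V]

def candF (G : SimpleGraph V) (c : Sym2 V → K) (k : ℕ) (q : ℝ)
    (old : Finset V) (usedC : Finset K) : Finset (Fin (k + 1) → V) :=
  univ.filter fun w =>
    (Function.Injective w ∧ ∀ i : Fin k, G.Adj (w i.castSucc) (w i.succ)) ∧
    (∀ i j : Fin k, c s(w i.castSucc, w i.succ) = c s(w j.castSucc, w j.succ) →
      s(w i.castSucc, w i.succ) = s(w j.castSucc, w j.succ)) ∧
    (∀ i : Fin k, c s(w i.castSucc, w i.succ) ∉ usedC) ∧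
    (∀ (i : Fin (k + 1)) (u : V), u ∈ old → ∀ p : G.Walk u (w i), k - 1 < p.length) ∧
    ((extCnt G k w : ℝ) ≤ q)

lemma step_main (G : SimpleGraph V) (c : Sym2 V → K)
    (hproper : ∀ u v w : V, G.Adj u v → G.Adj u w → v ≠ w → c s(u, v) ≠ c s(u, w))
    (n : ℕ) (hn : n = Fintype.card V) (d μ α : ℝ) (s k : ℕ)
    (hk : 2 ≤ k) (hkd : (k : ℝ) < d / 32)
    (hd : (n : ℝ) * d = 2 * (G.edgeFinset.card : ℝ))
    (hmax : ∀ v : V, (G.degree v : ℝ) ≤ μ * d)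
    (hcol : ∀ x : K, ((Nat.card {e : Sym2 V // e ∈ G.edgeSet ∧ c e = x}) : ℝ) ≤
      (n : ℝ) * d * μ / s)
    (hska : (s : ℝ) * (d ^ (k - 1) * μ ^ (k - 1)) ≤ (n : ℝ) / 4)
    (hα : 1 < α)
    (hhomR : ((Nat.card {f : ZMod (2 * k) → V // ∀ i, G.Adj (f i) (f (i + 1))}) : ℝ) ≤
      α * n * d ^ k)
    (hs1 : 1 ≤ s) (hμ1 : 1 ≤ μ)
    (old : Finset V) (usedC : Finset K)
    (holdc : (old.card : ℝ) ≤ ((s : ℝ) / (8 * k * μ)) * (k + 1))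
    (husedc : (usedC.card : ℝ) ≤ (s : ℝ) / (8 * μ)) :
    (n : ℝ) * (d / 32) ^ k ≤ ((candF G c k (2 * α * 16 ^ k) old usedC).card : ℝ) := by
  -- basic numeric facts
  have hk1 : (1 : ℝ) ≤ (k : ℝ) := by exact_mod_cast Nat.one_le_of_lt hk
  have hk2 : (2 : ℝ) ≤ (k : ℝ) := by exact_mod_cast hk
  have hd64 : 64 < d := by nlinarith
  have hdpos : 0 < d := by linarith
  have hμpos : 0 < μ := by linarith
  have hspos : (0 : ℝ) < (s : ℝ) := by exact_mod_cast hs1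
  have hμd32k : 32 * (k : ℝ) < μ * d := by nlinarith
  have hnpos : (0 : ℝ) < (n : ℝ) := by
    have h1 : (0:ℝ) < (s : ℝ) * (d ^ (k - 1) * μ ^ (k - 1)) := by positivity
    linarith
  -- the ball
  set B := ballF G old (k - 1) with hB
  have hballcard : ((B.card : ℝ)) ≤ (old.card : ℝ) * (1 + μ * d) ^ (k - 1) :=
    ballF_card G old (μ * d) (by positivity) hmax (k - 1)
  have hexp2 : Real.exp (2⁻¹ : ℝ) ≤ 2 := by
    by_contra hcon
    push_neg at hcon
    have h1 : Real.exp (2⁻¹ : ℝ) * Real.exp (2⁻¹ : ℝ) = Real.exp 1 := by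
      rw [← Real.exp_add]; norm_num
    have h2 : (4 : ℝ) ≤ Real.exp (2⁻¹) * Real.exp (2⁻¹) := by nlinarith
    have h3 := Real.exp_one_lt_d9
    rw [h1] at h2
    norm_num at h3
    linarith
  have hgrow : (1 + μ * d) ^ (k - 1) ≤ 2 * (μ * d) ^ (k - 1) := by
    have hmd : 0 < μ * d := by positivity
    have h1 : 1 + μ * d ≤ (μ * d) * Real.exp (μ * d)⁻¹ := by
      have := Real.add_one_le_exp ((μ * d)⁻¹)
      calc 1 + μ * d = (μ * d) * ((μ * d)⁻¹ + 1) := by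
            rw [mul_add, mul_inv_cancel₀ (ne_of_gt hmd), mul_one, add_comm]
        _ ≤ (μ * d) * Real.exp (μ * d)⁻¹ := by
            apply mul_le_mul_of_nonneg_left this (le_of_lt hmd)
    calc (1 + μ * d) ^ (k - 1) ≤ ((μ * d) * Real.exp (μ * d)⁻¹) ^ (k - 1) := by
          apply pow_le_pow_left₀ (by positivity) h1
      _ = (μ * d) ^ (k - 1) * (Real.exp (μ * d)⁻¹) ^ (k - 1) := by rw [mul_pow]
      _ ≤ (μ * d) ^ (k - 1) * 2 := by
          apply mul_le_mul_of_nonneg_left _ (by positivity)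
          rw [← Real.exp_nat_mul]
          calc Real.exp ((k - 1 : ℕ) * (μ * d)⁻¹) ≤ Real.exp (2⁻¹ : ℝ) := by
                apply Real.exp_le_exp.mpr
                rw [mul_inv_le_iff₀ hmd]
                have hkk : ((k - 1 : ℕ) : ℝ) ≤ (k : ℝ) := by
                  exact_mod_cast Nat.cast_le.mpr (Nat.sub_le k 1)
                nlinarith
            _ ≤ 2 := hexp2
      _ = 2 * (μ * d) ^ (k - 1) := by ring
  have hballcard2 : ((B.card : ℝ)) ≤ 2 * (old.card : ℝ) * (μ * d) ^ (k - 1) := by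
    calc ((B.card : ℝ)) ≤ (old.card : ℝ) * (1 + μ * d) ^ (k - 1) := hballcard
      _ ≤ (old.card : ℝ) * (2 * (μ * d) ^ (k - 1)) := by
          apply mul_le_mul_of_nonneg_left hgrow (by positivity)
      _ = 2 * (old.card : ℝ) * (μ * d) ^ (k - 1) := by ring
  -- the cleaned oriented edge set
  set E0 := (orientedE G).filter
    (fun p => c s(p.1, p.2) ∉ usedC ∧ p.1 ∉ B ∧ p.2 ∉ B) with hE0
  have hOsymm : ∀ p ∈ orientedE G, (p.2, p.1) ∈ orientedE G := by
    rintro ⟨a, b⟩ hp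
    simp only [orientedE, mem_filter, mem_univ, true_and] at hp ⊢
    exact hp.symm
  have hE0symm : ∀ p ∈ E0, (p.2, p.1) ∈ E0 := by
    rintro ⟨a, b⟩ hp
    simp only [hE0, mem_filter] at hp ⊢
    refine ⟨hOsymm _ hp.1, ?_, hp.2.2.2, hp.2.2.1⟩
    rw [Sym2.eq_swap]
    exact hp.2.1
  -- lower bound on E0
  have hOcard : ((orientedE G).card : ℝ) = (n : ℝ) * d := by
    rw [card_orientedE]
    push_cast
    linarith
  have hcbad : (((orientedE G).filter (fun p => c s(p.1, p.2) ∈ usedC)).card : ℝ) ≤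
      (n : ℝ) * d / 4 := by
    have h1 := cbad_card G c usedC ((n : ℝ) * d * μ / s) (by positivity) hcol
    calc (((orientedE G).filter (fun p => c s(p.1, p.2) ∈ usedC)).card : ℝ)
        ≤ (usedC.card : ℝ) * (2 * ((n : ℝ) * d * μ / s)) := h1
      _ ≤ ((s : ℝ) / (8 * μ)) * (2 * ((n : ℝ) * d * μ / s)) := by
          apply mul_le_mul_of_nonneg_right husedc (by positivity)
      _ = (n : ℝ) * d / 4 := by field_simp; ring
  have hbbad : (((orientedE G).filter (fun p => p.1 ∈ B ∨ p.2 ∈ B)).card : ℝ) ≤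
      3 * ((n : ℝ) * d) / 16 := by
    have h1 := bbad_card G B (μ * d) (by positivity) hmax
    have h2 : 2 * (B.card : ℝ) * (μ * d) ≤ 4 * (old.card : ℝ) * (μ * d) ^ k := by
      have hkk : (μ * d) ^ (k - 1) * (μ * d) = (μ * d) ^ k := by
        rw [← pow_succ]
        congr 1
        omega
      calc 2 * (B.card : ℝ) * (μ * d) ≤ 2 * (2 * (old.card : ℝ) * (μ * d) ^ (k - 1)) * (μ * d) := by
            have := mul_le_mul_of_nonneg_right hballcard2 (le_of_lt (by positivity : (0:ℝ) < μ * d))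
            nlinarith [hballcard2, (by positivity : (0:ℝ) < μ * d)]
        _ = 4 * (old.card : ℝ) * ((μ * d) ^ (k - 1) * (μ * d)) := by ring
        _ = 4 * (old.card : ℝ) * (μ * d) ^ k := by rw [hkk]
    have h3 : 4 * (old.card : ℝ) * (μ * d) ^ k ≤
        4 * (((s : ℝ) / (8 * k * μ)) * (k + 1)) * (μ * d) ^ k := by
      have := mul_le_mul_of_nonneg_right
        (mul_le_mul_of_nonneg_left holdc (by norm_num : (0:ℝ) ≤ 4))
        (le_of_lt (by positivity : (0:ℝ) < (μ * d) ^ k))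
      linarith
    have h4 : 4 * (((s : ℝ) / (8 * k * μ)) * (k + 1)) * (μ * d) ^ k ≤
        3 * ((n : ℝ) * d) / 16 := by
      have hμdk : (μ * d) ^ k = μ ^ k * d ^ k := mul_pow μ d k
      have hsplit : (μ:ℝ) ^ k = μ ^ (k - 1) * μ := by
        rw [← pow_succ]
        congr 1
        omega
      have hdsplit : (d:ℝ) ^ k = d ^ (k - 1) * d := by
        rw [← pow_succ]
        congr 1
        omega
      -- 4 * (s/(8kμ)) * (k+1) * μ^k d^k = (k+1)/(2k) * s μ^{k-1} d^{k-1} * d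
      have heq : 4 * (((s : ℝ) / (8 * k * μ)) * (k + 1)) * (μ * d) ^ k =
          (((k : ℝ) + 1) / (2 * k)) * ((s : ℝ) * (d ^ (k - 1) * μ ^ (k - 1))) * d := by
        rw [hμdk, hsplit, hdsplit]
        field_simp
        ring
      rw [heq]
      have hfrac : (((k : ℝ) + 1) / (2 * k)) ≤ 3 / 4 := by
        rw [div_le_div_iff₀ (by positivity) (by norm_num)]
        nlinarith
      have hs4 : (0:ℝ) ≤ (s : ℝ) * (d ^ (k - 1) * μ ^ (k - 1)) := by positivity
      calc (((k : ℝ) + 1) / (2 * k)) * ((s : ℝ) * (d ^ (k - 1) * μ ^ (k - 1))) * d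
          ≤ (3 / 4) * ((n : ℝ) / 4) * d := by
            apply mul_le_mul_of_nonneg_right _ (le_of_lt hdpos)
            apply mul_le_mul hfrac hska hs4 (by norm_num)
        _ ≤ 3 * ((n : ℝ) * d) / 16 := by ring_nf; linarith
    linarith
  have hE0card : 9 * ((n : ℝ) * d) / 16 ≤ (E0.card : ℝ) := by
    have hsplit : (orientedE G).card = E0.card +
        ((orientedE G).filter
          (fun p => ¬(c s(p.1, p.2) ∉ usedC ∧ p.1 ∉ B ∧ p.2 ∉ B))).card := by
      rw [hE0]
      exact (Finset.card_filter_add_card_filter_not _).symm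
    have hsub : ((orientedE G).filter
        (fun p => ¬(c s(p.1, p.2) ∉ usedC ∧ p.1 ∉ B ∧ p.2 ∉ B))) ⊆
        ((orientedE G).filter (fun p => c s(p.1, p.2) ∈ usedC)) ∪
        ((orientedE G).filter (fun p => p.1 ∈ B ∨ p.2 ∈ B)) := by
      intro p hp
      rw [mem_filter] at hp
      obtain ⟨hp1, hp2⟩ := hp
      rw [Finset.mem_union, mem_filter, mem_filter]
      by_cases hc : c s(p.1, p.2) ∈ usedC
      · exact Or.inl ⟨hp1, hc⟩
      · right
        refine ⟨hp1, ?_⟩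
        by_contra hb
        push_neg at hb
        exact hp2 ⟨hc, hb.1, hb.2⟩
    have h5 : (((orientedE G).filter
        (fun p => ¬(c s(p.1, p.2) ∉ usedC ∧ p.1 ∉ B ∧ p.2 ∉ B))).card : ℝ) ≤
        (n : ℝ) * d / 4 + 3 * ((n : ℝ) * d) / 16 := by
      calc (((orientedE G).filter
          (fun p => ¬(c s(p.1, p.2) ∉ usedC ∧ p.1 ∉ B ∧ p.2 ∉ B))).card : ℝ)
          ≤ ((((orientedE G).filter (fun p => c s(p.1, p.2) ∈ usedC)) ∪
            ((orientedE G).filter (fun p => p.1 ∈ B ∨ p.2 ∈ B))).card : ℝ) := by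
            exact_mod_cast Nat.cast_le.mpr (Finset.card_le_card hsub)
        _ ≤ (((orientedE G).filter (fun p => c s(p.1, p.2) ∈ usedC)).card : ℝ) +
            (((orientedE G).filter (fun p => p.1 ∈ B ∨ p.2 ∈ B)).card : ℝ) := by
            exact_mod_cast Finset.card_union_le _ _
        _ ≤ _ := by linarith
    have h6 : ((orientedE G).card : ℝ) = (E0.card : ℝ) +
        (((orientedE G).filter
          (fun p => ¬(c s(p.1, p.2) ∉ usedC ∧ p.1 ∉ B ∧ p.2 ∉ B))).card : ℝ) := by
      exact_mod_cast congrArg (Nat.cast : ℕ → ℝ) hsplit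
    rw [hOcard] at h6
    linarith
  -- peel to minimum degree d/8
  obtain ⟨E, hEsub, hEsymm, hEdeg, hEcard⟩ := peel (d / 8) (by positivity) E0 hE0symm
  have hEcard' : 5 * ((n : ℝ) * d) / 16 ≤ (E.card : ℝ) := by
    have : 2 * (d / 8) * (Fintype.card V : ℝ) = (n : ℝ) * d / 4 := by
      rw [← hn]; ring
    rw [this] at hEcard
    linarith
  have hEsubO : E ⊆ orientedE G := hEsub.trans (Finset.filter_subset _ _)
  have hEG : ∀ p ∈ E, G.Adj p.1 p.2 := by
    intro p hp
    have := hEsubO hp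
    simp only [orientedE, mem_filter, mem_univ, true_and] at this
    exact this
  -- count good walks
  have hθk : 2 * (2 * (k : ℝ) - 1) ≤ d / 8 := by linarith
  have hgood := goodW_count G c hproper E hEG hEsymm (d / 8) hEdeg
    (by omega : 1 ≤ k) hθk
  have hgood2 : 5 * (n : ℝ) * (d / 16) ^ k ≤ ((goodW c E k).card : ℝ) := by
    have hsplitk : (d / 16 : ℝ) ^ k = (d / 16) ^ (k - 1) * (d / 16) := by
      rw [← pow_succ]
      congr 1
      omega
    have hhalf : (d / 8 : ℝ) / 2 = d / 16 := by ring
    calc 5 * (n : ℝ) * (d / 16) ^ k = (5 * ((n : ℝ) * d) / 16) * (d / 16) ^ (k - 1) := by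
          rw [hsplitk]; ring
      _ ≤ (E.card : ℝ) * (d / 16) ^ (k - 1) := by
          apply mul_le_mul_of_nonneg_right hEcard' (by positivity)
      _ = (E.card : ℝ) * ((d / 8) / 2) ^ (k - 1) := by rw [hhalf]
      _ ≤ ((goodW c E k).card : ℝ) := hgood
  -- Markov for extension counts
  set q : ℝ := 2 * α * 16 ^ k with hq
  have hqpos : 0 < q := by
    rw [hq]
    have : (0:ℝ) < 16 ^ k := by positivity
    nlinarith
  have hmk := markov G k (by omega : 0 < k) q (α * n * d ^ k) hqpos hhomR
  have hmk2 : (((walkF G k).filter (fun w => ¬((extCnt G k w : ℝ) ≤ q))).card : ℝ) ≤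
      (1 / 2) * (n : ℝ) * (d / 16) ^ k := by
    have heq : α * (n : ℝ) * d ^ k / q = (1 / 2) * (n : ℝ) * (d / 16) ^ k := by
      rw [hq, div_pow]
      have hα0 : α ≠ 0 := by linarith
      have h16 : (16:ℝ) ^ k ≠ 0 := by positivity
      field_simp
    rw [heq] at hmk
    exact hmk
  -- the good candidates
  set S := (goodW c E k).filter (fun w => (extCnt G k w : ℝ) ≤ q) with hS
  have hSsub : goodW c E k ⊆ S ∪ ((walkF G k).filter (fun w => ¬((extCnt G k w : ℝ) ≤ q))) := by
    intro w hw
    rw [Finset.mem_union]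
    by_cases hext : (extCnt G k w : ℝ) ≤ q
    · exact Or.inl (mem_filter.mpr ⟨hw, hext⟩)
    · right
      rw [mem_filter]
      refine ⟨?_, hext⟩
      simp only [goodW, mem_filter, mem_univ, true_and] at hw
      simp only [walkF, mem_filter, mem_univ, true_and]
      intro i
      exact hEG _ (hw.1 i)
  have hScard : 4 * (n : ℝ) * (d / 16) ^ k ≤ (S.card : ℝ) := by
    have h1 : ((goodW c E k).card : ℝ) ≤ (S.card : ℝ) +
        (((walkF G k).filter (fun w => ¬((extCnt G k w : ℝ) ≤ q))).card : ℝ) := by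
      calc ((goodW c E k).card : ℝ)
          ≤ ((S ∪ ((walkF G k).filter (fun w => ¬((extCnt G k w : ℝ) ≤ q)))).card : ℝ) := by
            exact_mod_cast Nat.cast_le.mpr (Finset.card_le_card hSsub)
        _ ≤ _ := by exact_mod_cast Finset.card_union_le _ _
    have h42 : (4:ℝ) * (n : ℝ) * (d/16)^k ≤ 5 * (n : ℝ) * (d/16)^k - (1/2) * n * (d/16)^k := by
      nlinarith [hnpos, (by positivity : (0:ℝ) < (d/16)^k)]
    linarith
  -- S is contained in candF
  have hfinal : S ⊆ candF G c k q old usedC := by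
    intro w hw
    rw [hS, mem_filter] at hw
    obtain ⟨hwg, hwext⟩ := hw
    simp only [goodW, mem_filter, mem_univ, true_and] at hwg
    obtain ⟨hadj, hinj, hcolw⟩ := hwg
    have hnotB : ∀ i : Fin (k + 1), w i ∉ B := by
      intro i
      induction i using Fin.lastCases with
      | last =>
        set j : Fin k := ⟨k - 1, by omega⟩ with hj
        have hsucc : (j.succ : Fin (k + 1)) = Fin.last k := by
          apply Fin.ext
          simp [hj, Fin.val_succ, Fin.val_last]
          omega
        have h1 := hadj j
        rw [hsucc] at h1
        have h2 := hEsub h1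
        simp only [hE0, mem_filter] at h2
        exact h2.2.2.2
      | cast j =>
        have h1 := hadj j
        have h2 := hEsub h1
        simp only [hE0, mem_filter] at h2
        exact h2.2.2.1
    simp only [candF, mem_filter, mem_univ, true_and]
    refine ⟨⟨hinj, fun i => hEG _ (hadj i)⟩, ?_, ?_, ?_, hwext⟩
    · intro i j hcc
      rw [hcolw i j hcc]
    · intro i
      have h2 := hEsub (hadj i)
      simp only [hE0, mem_filter] at h2
      exact h2.2.1
    · intro i u hu p
      by_contra hlen
      push_neg at hlen
      have h1 : u ∈ ballF G old 0 := hu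
      have h2 := ballF_walk G old p h1
      have h3 : w i ∈ ballF G old (k - 1) := by
        apply ballF_mono G old _ h2
        omega
      exact hnotB i h3
  have hcand : (S.card : ℝ) ≤ ((candF G c k q old usedC).card : ℝ) := by
    exact_mod_cast Nat.cast_le.mpr (Finset.card_le_card hfinal)
  -- final arithmetic : n (d/32)^k ≤ 4 n (d/16)^k
  have harith : (n : ℝ) * (d / 32) ^ k ≤ 4 * (n : ℝ) * (d / 16) ^ k := by
    have h1 : (d / 32 : ℝ) ^ k ≤ (d / 16) ^ k := by
      apply pow_le_pow_left₀ (by positivity)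
      linarith
    nlinarith [hnpos]
  calc (n : ℝ) * (d / 32) ^ k ≤ 4 * (n : ℝ) * (d / 16) ^ k := harith
    _ ≤ (S.card : ℝ) := hScard
    _ ≤ _ := hcand

end StepMain

/-- A sequence of labelled paths `P 0, …, P (t-1)` (each a function `Fin (k+1) → V`) is
`(k,q)`-nice if: each path has `k` edges; each colour appears at most once on the union of the
paths; for `i ≠ j` every walk in `G` between a vertex of `P i` and a vertex of `P j` has length
greater than `k - 1`; and the number of homomorphic copies of `C_{2k}` extending each `P i` is
at most `q`. -/
def KQNicePaths {V K : Type*} (G : SimpleGraph V) (c : Sym2 V → K)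
    (k : ℕ) (q : ℝ) {t : ℕ} (P : Fin t → Fin (k + 1) → V) : Prop :=
  (∀ i, Function.Injective (P i) ∧ ∀ ℓ : Fin k, G.Adj (P i ℓ.castSucc) (P i ℓ.succ)) ∧
  (∀ i j (ℓ m : Fin k),
      c s(P i ℓ.castSucc, P i ℓ.succ) = c s(P j m.castSucc, P j m.succ) →
      s(P i ℓ.castSucc, P i ℓ.succ) = s(P j m.castSucc, P j m.succ)) ∧
  (∀ i j, i ≠ j → ∀ (ℓ m : Fin (k + 1)) (w : G.Walk (P i ℓ) (P j m)), k - 1 < w.length) ∧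
  (∀ i, (Nat.card {f : ZMod (2 * k) → V //
      (∀ x, G.Adj (f x) (f (x + 1))) ∧
      ∀ ℓ : Fin (k + 1), f ((ℓ : ℕ) : ZMod (2 * k)) = P i ℓ} : ℝ) ≤ q)

noncomputable section Assembly

open Finset
open scoped Classical

variable {V K : Type*} [Fintype V]

/-- vertices used by a partial sequence -/
def oldV {k j : ℕ} (P : Fin j → Fin (k + 1) → V) : Finset V :=
  univ.biUnion (fun i => Finset.image (P i) univ)

/-- colours used by a partial sequence -/
def usedK {k j : ℕ} (c : Sym2 V → K) (P : Fin j → Fin (k + 1) → V) : Finset K :=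
  univ.biUnion (fun i =>
    Finset.image (fun ℓ : Fin k => c s(P i ℓ.castSucc, P i ℓ.succ)) univ)

lemma nice_snoc (G : SimpleGraph V) (c : Sym2 V → K) (k : ℕ) (q : ℝ) {j : ℕ}
    (P : Fin j → Fin (k + 1) → V) (hP : KQNicePaths G c k q P)
    (w : Fin (k + 1) → V) (hw : w ∈ candF G c k q (oldV P) (usedK c P)) :
    KQNicePaths G c k q (Fin.snoc P w) := by
  obtain ⟨hP1, hP2, hP3, hP4⟩ := hP
  simp only [candF, mem_filter, mem_univ, true_and] at hw
  obtain ⟨hw1, hw2, hw3, hw4, hw5⟩ := hw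
  have hmemK : ∀ (i : Fin j) (m : Fin k), c s(P i m.castSucc, P i m.succ) ∈ usedK c P := by
    intro i m
    apply Finset.mem_biUnion.mpr
    exact ⟨i, mem_univ i, Finset.mem_image.mpr ⟨m, mem_univ m, rfl⟩⟩
  have hmemV : ∀ (i : Fin j) (ℓ : Fin (k + 1)), P i ℓ ∈ oldV P := by
    intro i ℓ
    apply Finset.mem_biUnion.mpr
    exact ⟨i, mem_univ i, Finset.mem_image.mpr ⟨ℓ, mem_univ ℓ, rfl⟩⟩
  refine ⟨?_, ?_, ?_, ?_⟩
  · intro i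
    induction i using Fin.lastCases with
    | last => rw [Fin.snoc_last]; exact hw1
    | cast i' => rw [Fin.snoc_castSucc]; exact hP1 i'
  · intro i jj ℓ m
    induction i using Fin.lastCases with
    | last =>
      induction jj using Fin.lastCases with
      | last =>
        rw [Fin.snoc_last]
        exact hw2 ℓ m
      | cast j' =>
        rw [Fin.snoc_last, Fin.snoc_castSucc]
        intro hcc
        exact absurd (hcc ▸ hmemK j' m) (hw3 ℓ)
    | cast i' =>
      induction jj using Fin.lastCases with
      | last =>
        rw [Fin.snoc_last, Fin.snoc_castSucc]
        intro hcc
        exact absurd (hcc ▸ hmemK i' ℓ) (hw3 m)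
      | cast j' =>
        rw [Fin.snoc_castSucc, Fin.snoc_castSucc]
        exact hP2 i' j' ℓ m
  · intro i jj hne ℓ m
    induction i using Fin.lastCases with
    | last =>
      induction jj using Fin.lastCases with
      | last => exact absurd rfl hne
      | cast j' =>
        rw [Fin.snoc_last, Fin.snoc_castSucc]
        intro p
        have := hw4 ℓ (P j' m) (hmemV j' m) p.reverse
        rwa [SimpleGraph.Walk.length_reverse] at this
    | cast i' =>
      induction jj using Fin.lastCases with
      | last =>
        rw [Fin.snoc_last, Fin.snoc_castSucc]
        intro p
        exact hw4 m (P i' ℓ) (hmemV i' ℓ) p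
      | cast j' =>
        rw [Fin.snoc_castSucc, Fin.snoc_castSucc]
        have hne' : i' ≠ j' := by
          intro h
          exact hne (by rw [h])
        exact hP3 i' j' hne' ℓ m
  · intro i
    induction i using Fin.lastCases with
    | last =>
      rw [Fin.snoc_last]
      exact hw5
    | cast i' =>
      rw [Fin.snoc_castSucc]
      exact hP4 i'

end Assembly

noncomputable section Assembly2
open Finset
open scoped Classical
variable {V K : Type*} [Fintype V]

lemma nice_count (G : SimpleGraph V) (c : Sym2 V → K)
    (hproper : ∀ u v w : V, G.Adj u v → G.Adj u w → v ≠ w → c s(u, v) ≠ c s(u, w))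
    (n : ℕ) (hn : n = Fintype.card V) (d μ α : ℝ) (s k t : ℕ)
    (hk : 2 ≤ k) (hkd : (k : ℝ) < d / 32)
    (hd : (n : ℝ) * d = 2 * (G.edgeFinset.card : ℝ))
    (hmax : ∀ v : V, (G.degree v : ℝ) ≤ μ * d)
    (hcol : ∀ x : K, ((Nat.card {e : Sym2 V // e ∈ G.edgeSet ∧ c e = x}) : ℝ) ≤
      (n : ℝ) * d * μ / s)
    (hska : (s : ℝ) * (d ^ (k - 1) * μ ^ (k - 1)) ≤ (n : ℝ) / 4)
    (hα : 1 < α)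
    (hhomR : ((Nat.card {f : ZMod (2 * k) → V // ∀ i, G.Adj (f i) (f (i + 1))}) : ℝ) ≤
      α * n * d ^ k)
    (hs1 : 1 ≤ s) (hμ1 : 1 ≤ μ)
    (hjt : ∀ j : ℕ, j < t → (j : ℝ) < (s : ℝ) / (8 * k * μ)) :
    ∀ j : ℕ, j ≤ t →
      ((n : ℝ) * (d / 32) ^ k) ^ j ≤
        ((univ.filter (fun P : Fin j → Fin (k + 1) → V =>
          KQNicePaths G c k (2 * α * 16 ^ k) P)).card : ℝ) := by
  have hk1 : (1 : ℝ) ≤ (k : ℝ) := by exact_mod_cast Nat.one_le_of_lt hk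
  have hk2 : (2 : ℝ) ≤ (k : ℝ) := by exact_mod_cast hk
  have hd64 : 64 < d := by nlinarith
  have hμpos : (0:ℝ) < μ := by linarith
  have hkpos : (0:ℝ) < (k:ℝ) := by linarith
  have hm0 : (0:ℝ) ≤ (n : ℝ) * (d / 32) ^ k := by positivity
  intro j
  induction j with
  | zero =>
    intro _
    rw [pow_zero]
    have hne : (univ.filter (fun P : Fin 0 → Fin (k + 1) → V =>
        KQNicePaths G c k (2 * α * 16 ^ k) P)).Nonempty := by
      refine ⟨fun i => i.elim0, ?_⟩
      rw [mem_filter]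
      refine ⟨mem_univ _, ?_, ?_, ?_, ?_⟩
      · intro i; exact i.elim0
      · intro i; exact i.elim0
      · intro i; exact i.elim0
      · intro i; exact i.elim0
    have := Finset.card_pos.mpr hne
    exact_mod_cast this
  | succ m ih =>
    intro hmt
    have hm : m ≤ t := by omega
    have ihm := ih hm
    have hjlt := hjt m (by omega)
    -- per prefix bounds
    have key : ∀ P : Fin m → Fin (k + 1) → V,
        (n : ℝ) * (d / 32) ^ k ≤
          ((candF G c k (2 * α * 16 ^ k) (oldV P) (usedK c P)).card : ℝ) := by
      intro P
      apply step_main G c hproper n hn d μ α s k hk hkd hd hmax hcol hska hα hhomR hs1 hμ1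
      · -- oldV card
        have h1 : (oldV P).card ≤ m * (k + 1) := by
          calc (oldV P).card ≤ ∑ i : Fin m, (Finset.image (P i) univ).card :=
                Finset.card_biUnion_le
            _ ≤ ∑ _i : Fin m, (k + 1) := by
                apply Finset.sum_le_sum
                intro i _
                calc (Finset.image (P i) univ).card ≤ (univ : Finset (Fin (k+1))).card :=
                      Finset.card_image_le
                  _ = k + 1 := by simp
            _ = m * (k + 1) := by simp [mul_comm]
        calc ((oldV P).card : ℝ) ≤ (m : ℝ) * ((k : ℝ) + 1) := by
              have := (Nat.cast_le (α := ℝ)).mpr h1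
              push_cast at this
              linarith
          _ ≤ ((s : ℝ) / (8 * k * μ)) * ((k : ℝ) + 1) := by
              apply mul_le_mul_of_nonneg_right (le_of_lt hjlt) (by linarith)
      · -- usedK card
        have h1 : (usedK c P).card ≤ m * k := by
          calc (usedK c P).card ≤ ∑ i : Fin m,
                (Finset.image (fun ℓ : Fin k => c s(P i ℓ.castSucc, P i ℓ.succ)) univ).card :=
                Finset.card_biUnion_le
            _ ≤ ∑ _i : Fin m, k := by
                apply Finset.sum_le_sum
                intro i _
                calc _ ≤ (univ : Finset (Fin k)).card := Finset.card_image_le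
                  _ = k := by simp
            _ = m * k := by simp [mul_comm]
        have heq : ((s : ℝ) / (8 * k * μ)) * (k : ℝ) = (s : ℝ) / (8 * μ) := by
          field_simp
        calc ((usedK c P).card : ℝ) ≤ (m : ℝ) * (k : ℝ) := by
              have := (Nat.cast_le (α := ℝ)).mpr h1
              push_cast at this
              linarith
          _ ≤ ((s : ℝ) / (8 * k * μ)) * (k : ℝ) := by
              apply mul_le_mul_of_nonneg_right (le_of_lt hjlt) (by linarith)
          _ = (s : ℝ) / (8 * μ) := heq
    -- build the injection
    set Nic : (j : ℕ) → Finset (Fin j → Fin (k + 1) → V) := fun j =>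
      univ.filter (fun P : Fin j → Fin (k + 1) → V =>
        KQNicePaths G c k (2 * α * 16 ^ k) P) with hNic
    set T := ((Nic m).sigma
        (fun P => candF G c k (2 * α * 16 ^ k) (oldV P) (usedK c P))).image
        (fun pr => (Fin.snoc pr.1 pr.2 : Fin (m + 1) → Fin (k + 1) → V)) with hT
    have hTsub : T ⊆ Nic (m + 1) := by
      intro Q hQ
      rw [hT, Finset.mem_image] at hQ
      obtain ⟨pr, hpr, rfl⟩ := hQ
      rw [Finset.mem_sigma] at hpr
      rw [hNic, mem_filter]
      refine ⟨mem_univ _, ?_⟩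
      have h9 := hpr.1
      rw [hNic, mem_filter] at h9
      exact nice_snoc G c k _ pr.1 h9.2 pr.2 hpr.2
    have hTcard : T.card = ∑ P ∈ Nic m,
        (candF G c k (2 * α * 16 ^ k) (oldV P) (usedK c P)).card := by
      rw [hT]
      rw [Finset.card_image_of_injOn, Finset.card_sigma]
      rintro ⟨P1, w1⟩ h1 ⟨P2, w2⟩ h2 hab
      simp only at hab
      have hfst : P1 = P2 := by
        have := congrArg Fin.init hab
        rwa [Fin.init_snoc, Fin.init_snoc] at this
      subst hfst
      have hsnd : w1 = w2 := by
        have := congrArg (fun f => f (Fin.last m)) hab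
        simpa [Fin.snoc_last] using this
      rw [hsnd]
    have hstep2 : ((Nic m).card : ℝ) * ((n : ℝ) * (d / 32) ^ k) ≤ ((Nic (m+1)).card : ℝ) := by
      calc ((Nic m).card : ℝ) * ((n : ℝ) * (d / 32) ^ k)
          = ∑ _P ∈ Nic m, ((n : ℝ) * (d / 32) ^ k) := by
            rw [Finset.sum_const, nsmul_eq_mul]
        _ ≤ ∑ P ∈ Nic m,
            ((candF G c k (2 * α * 16 ^ k) (oldV P) (usedK c P)).card : ℝ) := by
            apply Finset.sum_le_sum
            intro P _
            exact key P
        _ = (T.card : ℝ) := by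
            rw [hTcard]
            push_cast
            rfl
        _ ≤ ((Nic (m+1)).card : ℝ) := by
            exact_mod_cast Nat.cast_le.mpr (Finset.card_le_card hTsub)
    calc ((n : ℝ) * (d / 32) ^ k) ^ (m + 1)
        = ((n : ℝ) * (d / 32) ^ k) ^ m * ((n : ℝ) * (d / 32) ^ k) := by rw [pow_succ]
      _ ≤ ((Nic m).card : ℝ) * ((n : ℝ) * (d / 32) ^ k) := by
          apply mul_le_mul_of_nonneg_right ihm hm0
      _ ≤ ((Nic (m+1)).card : ℝ) := hstep2

end Assembly2

open Finset

/-- If `G` is a properly edge-coloured μ-balanced graph on `n` vertices with average degree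
`d ≥ 2` and `s` colours, `2 ≤ k < d/32`, `s ≤ (1/4)·n·d^{-k+1}·μ^{-k+1}`, `α > 1` and
`hom(C_{2k},G) ≤ α·n·d^k`, then for `t = ⌈s/(8kμ)⌉` there are at least `(n·(d/32)^k)^t`
sequences of labelled paths which are `(k, 2α·16^k)`-nice. -/
theorem stmt_16 {V K : Type*} [Fintype V]
    (G : SimpleGraph V) (c : Sym2 V → K)
    (hproper : ∀ u v w : V, G.Adj u v → G.Adj u w → v ≠ w → c s(u, v) ≠ c s(u, w))
    (n : ℕ) (hn : n = Fintype.card V) (d μ α : ℝ) (hd2 : 2 ≤ d) (s k : ℕ) (hk : 2 ≤ k)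
    (hkd : (k : ℝ) < d / 32)
    (hd : (n : ℝ) * d = 2 * Nat.card G.edgeSet)
    (hmax : ∀ v : V, (Nat.card (G.neighborSet v) : ℝ) ≤ μ * d)
    (hs : s = Nat.card {x : K // ∃ e ∈ G.edgeSet, c e = x}) (hsn : s ≤ n)
    (hcol : ∀ x : K, (Nat.card {e : Sym2 V // e ∈ G.edgeSet ∧ c e = x} : ℝ) ≤ n * d * μ / s)
    (hsk : (s : ℝ) ≤ 1 / 4 * n * d ^ (-(k : ℝ) + 1) * μ ^ (-(k : ℝ) + 1))
    (hα : 1 < α)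
    (hhom : (Nat.card {f : ZMod (2 * k) → V // ∀ i, G.Adj (f i) (f (i + 1))} : ℝ) ≤
      α * n * d ^ k)
    (t : ℕ) (ht : t = ⌈(s : ℝ) / (8 * k * μ)⌉₊) :
    ((n : ℝ) * (d / 32) ^ k) ^ t ≤
      Nat.card {P : Fin t → Fin (k + 1) → V // KQNicePaths G c k (2 * α * 16 ^ k) P} := by
  classical
  have hgoal : (Nat.card {P : Fin t → Fin (k + 1) → V //
      KQNicePaths G c k (2 * α * 16 ^ k) P} : ℕ) =
      ((univ.filter (fun P : Fin t → Fin (k + 1) → V =>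
        KQNicePaths G c k (2 * α * 16 ^ k) P)).card : ℕ) := by
    rw [Nat.card_eq_fintype_card, Fintype.card_subtype]
  rw [hgoal]
  rcases Nat.eq_zero_or_pos t with ht0 | htpos
  · subst ht0
    rw [pow_zero]
    have hne : (univ.filter (fun P : Fin 0 → Fin (k + 1) → V =>
        KQNicePaths G c k (2 * α * 16 ^ k) P)).Nonempty := by
      refine ⟨fun i => i.elim0, ?_⟩
      rw [mem_filter]
      exact ⟨mem_univ _, fun i => i.elim0, fun i => i.elim0, fun i => i.elim0,
        fun i => i.elim0⟩
    have := Finset.card_pos.mpr hne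
    exact_mod_cast this
  · -- t ≥ 1 : derive the auxiliary facts
    have hk1 : (1 : ℝ) ≤ (k : ℝ) := by exact_mod_cast Nat.one_le_of_lt hk
    have hk2 : (2 : ℝ) ≤ (k : ℝ) := by exact_mod_cast hk
    have hd64 : 64 < d := by nlinarith
    have hdpos : (0 : ℝ) < d := by linarith
    have hceil : (0 : ℝ) < (s : ℝ) / (8 * k * μ) := by
      rw [ht] at htpos
      exact Nat.ceil_pos.mp htpos
    have hdiv := div_pos_iff.mp hceil
    have hspos : (0 : ℝ) < (s : ℝ) := by
      rcases hdiv with ⟨h1, _⟩ | ⟨h1, _⟩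
      · exact h1
      · have h0 : (0:ℝ) ≤ (s:ℝ) := Nat.cast_nonneg s
        linarith
    have h8kμ : (0 : ℝ) < 8 * (k : ℝ) * μ := by
      rcases hdiv with ⟨_, h2⟩ | ⟨_, h2⟩
      · exact h2
      · linarith
    have hμpos : (0 : ℝ) < μ := by
      by_contra hcon
      push_neg at hcon
      have : 8 * (k : ℝ) * μ ≤ 0 := by nlinarith
      linarith
    have hs1 : 1 ≤ s := by
      by_contra hcon
      push_neg at hcon
      interval_cases s
      simp at hspos
    -- an edge exists
    have hedge : G.edgeFinset.Nonempty := by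
      have hpos : 0 < Nat.card {x : K // ∃ e ∈ G.edgeSet, c e = x} := by omega
      obtain ⟨⟨x, e, he, -⟩, -⟩ := Nat.card_pos_iff.mp hpos
      exact ⟨e, SimpleGraph.mem_edgeFinset.mpr he⟩
    -- convert hd
    have hdE : (n : ℝ) * d = 2 * (G.edgeFinset.card : ℝ) := by
      rw [hd]
      congr 1
      rw [Nat.card_eq_fintype_card]
      rw [SimpleGraph.edgeFinset_card]
    have hnpos : (0 : ℝ) < (n : ℝ) := by
      have h1 : 1 ≤ G.edgeFinset.card := Finset.card_pos.mpr hedge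
      have h2 : (1 : ℝ) ≤ (G.edgeFinset.card : ℝ) := by exact_mod_cast h1
      nlinarith
    have hVne : Nonempty V := by
      rw [← Fintype.card_pos_iff, ← hn]
      exact_mod_cast hnpos
    -- degree conversion
    have hmax' : ∀ v : V, (G.degree v : ℝ) ≤ μ * d := by
      intro v
      have := hmax v
      rwa [Nat.card_eq_fintype_card, SimpleGraph.card_neighborSet_eq_degree] at this
    -- μ ≥ 1
    have hsumdeg : ∑ v : V, (G.degree v : ℝ) = (n : ℝ) * d := by
      have h1 := SimpleGraph.sum_degrees_eq_twice_card_edges G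
      have h2 : ((∑ v : V, G.degree v : ℕ) : ℝ) = 2 * (G.edgeFinset.card : ℝ) := by
        rw [h1]; push_cast; ring
      rw [← hdE] at h2
      rw [← h2]
      push_cast
      rfl
    have hμ1 : 1 ≤ μ := by
      by_contra hcon
      push_neg at hcon
      have hlt : ∀ v : V, (G.degree v : ℝ) < d := by
        intro v
        calc (G.degree v : ℝ) ≤ μ * d := hmax' v
          _ < 1 * d := by
              apply mul_lt_mul_of_pos_right hcon hdpos
          _ = d := by ring
      have hsum : ∑ v : V, (G.degree v : ℝ) < ∑ _v : V, d :=
        Finset.sum_lt_sum_of_nonempty (univ_nonempty) (fun v _ => hlt v)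
      rw [hsumdeg, Finset.sum_const, nsmul_eq_mul, Finset.card_univ, ← hn] at hsum
      linarith
    -- convert hsk to natural powers
    have hska : (s : ℝ) * (d ^ (k - 1) * μ ^ (k - 1)) ≤ (n : ℝ) / 4 := by
      have hcast : (-(k : ℝ) + 1) = -(((k - 1 : ℕ) : ℝ)) := by
        have : ((k - 1 : ℕ) : ℝ) = (k : ℝ) - 1 := by
          have : (1:ℕ) ≤ k := by omega
          push_cast [Nat.cast_sub this]
          ring
        rw [this]
        ring
      have hdr : d ^ (-(k : ℝ) + 1) = ((d ^ (k - 1 : ℕ) : ℝ))⁻¹ := by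
        rw [hcast, Real.rpow_neg (le_of_lt hdpos), Real.rpow_natCast]
      have hmr : μ ^ (-(k : ℝ) + 1) = ((μ ^ (k - 1 : ℕ) : ℝ))⁻¹ := by
        rw [hcast, Real.rpow_neg (le_of_lt hμpos), Real.rpow_natCast]
      rw [hdr, hmr] at hsk
      have hdk : (0:ℝ) < d ^ (k - 1 : ℕ) := by positivity
      have hmk : (0:ℝ) < μ ^ (k - 1 : ℕ) := by positivity
      have h2 := mul_le_mul_of_nonneg_right hsk
        (le_of_lt (by positivity : (0:ℝ) < d ^ (k - 1 : ℕ) * μ ^ (k - 1 : ℕ)))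
      calc (s : ℝ) * (d ^ (k - 1) * μ ^ (k - 1)) ≤
          1 / 4 * (n : ℝ) * ((d ^ (k - 1 : ℕ) : ℝ))⁻¹ * ((μ ^ (k - 1 : ℕ) : ℝ))⁻¹ *
            (d ^ (k - 1 : ℕ) * μ ^ (k - 1 : ℕ)) := h2
        _ = (n : ℝ) / 4 := by
            field_simp
    -- index bound
    have hjt : ∀ j : ℕ, j < t → (j : ℝ) < (s : ℝ) / (8 * k * μ) := by
      intro j hj
      rw [ht] at hj
      exact Nat.lt_ceil.mp hj
    have := nice_count G c hproper n hn d μ α s k t hk hkd hdE hmax' hcol hska hα hhom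
      hs1 hμ1 hjt t (le_refl t)
    exact this
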